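/- arXiv:2505.23594 — 4 statements merged into one kernel-verified Lean document; each statement's English description precedes it below -/
import Mathlib

section
/- Let x̃, x ∈ ℝ^n have all entries in [x_min, x_max] with 0 < x_min ≤ x_max, let X̃ = diag(x̃), X = diag(x), and let A be an m×n real matrix such that Σ̃ = (A X̃² Aᵀ)^{-1} and Σ = (A X² Aᵀ)^{-1} exist; set ΔΣ = Σ̃ − Σ. Then Tr(Σ^{-1} ΔΣ Σ^{-1} ΔΣ) ≥ (x_min⁴ λ_min²(AAᵀ) / (x_max⁸ λ_max⁴(AAᵀ))) · ‖A(X̃² − X²)Aᵀ‖_HS², and Tr(Σ^{-1} ΔΣ Σ^{-1} ΔΣ) ≤ (x_max⁴ λ_max²(AAᵀ) / (x_min⁸ λ_min⁴(AAᵀ))) · ‖A(X̃² − X²)Aᵀ‖_HS². -/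
open Matrix

section Helpers

variable {k : ℕ}

private lemma quadform_diag_conj (U : Matrix (Fin k) (Fin k) ℝ) (hU1 : U * Uᵀ = 1)
    (hU2 : Uᵀ * U = 1) (d : Fin k → ℝ) (v : Fin k → ℝ) :
    v ⬝ᵥ ((U * diagonal d * Uᵀ) *ᵥ v) = ∑ i, d i * (Uᵀ *ᵥ v) i ^ 2 ∧
      v ⬝ᵥ v = ∑ i, (Uᵀ *ᵥ v) i ^ 2 := by
  set w := Uᵀ *ᵥ v with hw
  constructor
  · rw [← mulVec_mulVec, ← mulVec_mulVec, Matrix.dotProduct_mulVec, ← Matrix.mulVec_transpose,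
      ← hw, dotProduct]
    refine Finset.sum_congr rfl fun i _ => ?_
    rw [mulVec_diagonal]
    ring
  · have hv : U *ᵥ w = v := by rw [hw, mulVec_mulVec, hU1, one_mulVec]
    calc v ⬝ᵥ v = v ⬝ᵥ (U *ᵥ w) := by rw [hv]
    _ = w ⬝ᵥ w := by
        rw [Matrix.dotProduct_mulVec, ← Matrix.mulVec_transpose, ← hw]
    _ = ∑ i, w i ^ 2 := by
        rw [dotProduct]; exact Finset.sum_congr rfl fun i _ => (sq (w i)).symm

private lemma rayleigh_of_decomp (U : Matrix (Fin k) (Fin k) ℝ) (hU1 : U * Uᵀ = 1)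
    (hU2 : Uᵀ * U = 1) (d : Fin k → ℝ) (a b : ℝ) (hd : ∀ i, d i ∈ Set.Icc a b)
    (v : Fin k → ℝ) :
    a * (v ⬝ᵥ v) ≤ v ⬝ᵥ ((U * diagonal d * Uᵀ) *ᵥ v) ∧
      v ⬝ᵥ ((U * diagonal d * Uᵀ) *ᵥ v) ≤ b * (v ⬝ᵥ v) := by
  obtain ⟨h1, h2⟩ := quadform_diag_conj U hU1 hU2 d v
  rw [h1, h2, Finset.mul_sum, Finset.mul_sum]
  constructor <;> refine Finset.sum_le_sum fun i _ => ?_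
  · exact mul_le_mul_of_nonneg_right (hd i).1 (sq_nonneg _)
  · exact mul_le_mul_of_nonneg_right (hd i).2 (sq_nonneg _)

private lemma eigvec_dot {H : Matrix (Fin k) (Fin k) ℝ} (hH : H.IsHermitian) (i : Fin k) :
    (⇑(hH.eigenvectorBasis i) : Fin k → ℝ) ⬝ᵥ ⇑(hH.eigenvectorBasis i) = 1 := by
  set v : Fin k → ℝ := ⇑(hH.eigenvectorBasis i) with hv
  have h1 : ‖hH.eigenvectorBasis i‖ = 1 := hH.eigenvectorBasis.orthonormal.1 i
  have hvv : v ⬝ᵥ v = ∑ j, v j * v j := rfl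
  rw [hvv]
  have h2 := EuclideanSpace.norm_eq (hH.eigenvectorBasis i)
  rw [h1] at h2
  have h3 : ∑ j, ‖(hH.eigenvectorBasis i) j‖ ^ 2 = 1 := by
    have := congrArg (· ^ 2) h2
    simpa [Real.sq_sqrt (Finset.sum_nonneg fun j _ => sq_nonneg _)] using this.symm
  calc ∑ j, v j * v j = ∑ j, ‖(hH.eigenvectorBasis i) j‖ ^ 2 := by
        refine Finset.sum_congr rfl fun j _ => ?_
        show v j * v j = _
        rw [Real.norm_eq_abs, sq_abs, sq]
  _ = 1 := h3

private lemma eigvec_quad {H : Matrix (Fin k) (Fin k) ℝ} (hH : H.IsHermitian) (i : Fin k) :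
    (⇑(hH.eigenvectorBasis i) : Fin k → ℝ) ⬝ᵥ (H *ᵥ ⇑(hH.eigenvectorBasis i)) =
      hH.eigenvalues i := by
  rw [hH.mulVec_eigenvectorBasis i, dotProduct_smul, smul_eq_mul, eigvec_dot hH i, mul_one]

private lemma eigenvalues_bounds_of_rayleigh {H : Matrix (Fin k) (Fin k) ℝ}
    (hH : H.IsHermitian) (a b : ℝ)
    (hq : ∀ v : Fin k → ℝ, a * (v ⬝ᵥ v) ≤ v ⬝ᵥ (H *ᵥ v) ∧ v ⬝ᵥ (H *ᵥ v) ≤ b * (v ⬝ᵥ v))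
    (i : Fin k) : hH.eigenvalues i ∈ Set.Icc a b := by
  obtain ⟨hl, hr⟩ := hq ⇑(hH.eigenvectorBasis i)
  rw [eigvec_quad hH i, eigvec_dot hH i, mul_one] at hl hr
  exact ⟨hl, hr⟩

private lemma trace_sq_eq (E : Matrix (Fin k) (Fin k) ℝ) (hE : Eᵀ = E) :
    (E * E).trace = ∑ i, ∑ j, E i j ^ 2 := by
  rw [Matrix.trace]
  refine Finset.sum_congr rfl fun i _ => ?_
  rw [Matrix.diag_apply, Matrix.mul_apply]
  refine Finset.sum_congr rfl fun j _ => ?_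
  have : E j i = E i j := by conv_lhs => rw [← hE, Matrix.transpose_apply]
  rw [this, sq]

private lemma trace_conj_diag_bounds (U : Matrix (Fin k) (Fin k) ℝ) (hU1 : U * Uᵀ = 1)
    (hU2 : Uᵀ * U = 1) (d : Fin k → ℝ) (a b : ℝ) (ha : 0 ≤ a)
    (hd : ∀ i, d i ∈ Set.Icc a b) (D : Matrix (Fin k) (Fin k) ℝ) (hD : Dᵀ = D) :
    a ^ 2 * (D * D).trace ≤
        ((U * diagonal d * Uᵀ) * D * (U * diagonal d * Uᵀ) * D).trace ∧
      ((U * diagonal d * Uᵀ) * D * (U * diagonal d * Uᵀ) * D).trace ≤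
        b ^ 2 * (D * D).trace := by
  set E := Uᵀ * D * U with hEdef
  have hE : Eᵀ = E := by
    rw [hEdef, Matrix.transpose_mul, Matrix.transpose_mul, Matrix.transpose_transpose, hD,
      mul_assoc]
  have hDE : D = U * E * Uᵀ := by
    rw [hEdef]
    calc D = (U * Uᵀ) * D * (U * Uᵀ) := by rw [hU1, one_mul, mul_one]
    _ = U * (Uᵀ * D * U) * Uᵀ := by noncomm_ring
  have htr1 : ((U * diagonal d * Uᵀ) * D * (U * diagonal d * Uᵀ) * D).trace
      = (diagonal d * E * diagonal d * E).trace := by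
    conv_lhs => rw [hDE]
    have : (U * diagonal d * Uᵀ) * (U * E * Uᵀ) * (U * diagonal d * Uᵀ) * (U * E * Uᵀ)
        = U * (diagonal d * E * diagonal d * E) * Uᵀ := by
      have h2 := hU2
      calc (U * diagonal d * Uᵀ) * (U * E * Uᵀ) * (U * diagonal d * Uᵀ) * (U * E * Uᵀ)
          = U * diagonal d * (Uᵀ * U) * E * (Uᵀ * U) * diagonal d * (Uᵀ * U) * E * Uᵀ := by
            noncomm_ring
      _ = U * (diagonal d * E * diagonal d * E) * Uᵀ := by rw [h2]; noncomm_ring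
    rw [this, Matrix.trace_mul_cycle, ← mul_assoc, hU2, one_mul]
  have htr2 : (D * D).trace = (E * E).trace := by
    conv_lhs => rw [hDE]
    have : (U * E * Uᵀ) * (U * E * Uᵀ) = U * (E * (Uᵀ * U) * E) * Uᵀ := by noncomm_ring
    rw [this, hU2, mul_one, Matrix.trace_mul_cycle, ← mul_assoc, hU2, one_mul]
  have hexp : (diagonal d * E * diagonal d * E).trace = ∑ i, ∑ j, (d i * d j) * E i j ^ 2 := by
    rw [Matrix.trace]
    refine Finset.sum_congr rfl fun i _ => ?_
    rw [Matrix.diag_apply, Matrix.mul_apply]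
    refine Finset.sum_congr rfl fun j _ => ?_
    have hEji : E j i = E i j := by conv_lhs => rw [← hE, Matrix.transpose_apply]
    have h1 : (diagonal d * E * diagonal d) i j = d i * E i j * d j := by
      rw [Matrix.mul_apply]
      simp [Matrix.mul_apply, Matrix.diagonal_apply, Finset.sum_ite_eq, Finset.sum_ite_eq']
    rw [h1, hEji]
    ring
  rw [htr1, htr2, hexp, trace_sq_eq E hE, Finset.mul_sum, Finset.mul_sum]
  constructor <;> refine Finset.sum_le_sum fun i _ => ?_ <;>
    rw [Finset.mul_sum] <;> refine Finset.sum_le_sum fun j _ => ?_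
  · refine mul_le_mul_of_nonneg_right ?_ (sq_nonneg _)
    rw [sq]
    exact mul_le_mul (hd i).1 (hd j).1 ha (ha.trans (hd i).1)
  · refine mul_le_mul_of_nonneg_right ?_ (sq_nonneg _)
    rw [sq]
    exact mul_le_mul (hd i).2 (hd j).2 (ha.trans (hd j).1) (ha.trans ((hd i).1.trans (hd i).2))

end Helpers

/-- Largest eigenvalue of a square real matrix (via its real spectrum). -/
noncomputable def lamMax {n : ℕ} (M : Matrix (Fin n) (Fin n) ℝ) : ℝ := sSup (spectrum ℝ M)

/-- Smallest eigenvalue of a square real matrix (via its real spectrum). -/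
noncomputable def lamMin {n : ℕ} (M : Matrix (Fin n) (Fin n) ℝ) : ℝ := sInf (spectrum ℝ M)

/-- Squared Hilbert–Schmidt (Frobenius) norm `‖M‖_HS²`. -/
noncomputable def frobSq {m n : ℕ} (M : Matrix (Fin m) (Fin n) ℝ) : ℝ :=
  ∑ i, ∑ j, (M i j) ^ 2

/-- Two-sided bound on `Tr(Σ⁻¹ ΔΣ Σ⁻¹ ΔΣ)` in terms of `‖A(X̃² − X²)Aᵀ‖_HS²`, where
`Σ̃ = (A X̃² Aᵀ)⁻¹`, `Σ = (A X² Aᵀ)⁻¹` and `ΔΣ = Σ̃ − Σ`. -/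
theorem trace_quadratic_bounds {m n : ℕ} (A : Matrix (Fin m) (Fin n) ℝ)
    (xt x : Fin n → ℝ) (xmin xmax : ℝ) (hmin : 0 < xmin) (hmm : xmin ≤ xmax)
    (hxt : ∀ i, xt i ∈ Set.Icc xmin xmax) (hx : ∀ i, x i ∈ Set.Icc xmin xmax)
    (hinvt : IsUnit (A * (Matrix.diagonal xt) ^ 2 * Aᵀ).det)
    (hinv : IsUnit (A * (Matrix.diagonal x) ^ 2 * Aᵀ).det) :
    let St := (A * (Matrix.diagonal xt) ^ 2 * Aᵀ)⁻¹
    let S := (A * (Matrix.diagonal x) ^ 2 * Aᵀ)⁻¹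
    let dS := St - S
    (xmin ^ 4 * (lamMin (A * Aᵀ)) ^ 2 / (xmax ^ 8 * (lamMax (A * Aᵀ)) ^ 4)) *
        frobSq (A * ((Matrix.diagonal xt) ^ 2 - (Matrix.diagonal x) ^ 2) * Aᵀ) ≤
      (S⁻¹ * dS * S⁻¹ * dS).trace ∧
    (S⁻¹ * dS * S⁻¹ * dS).trace ≤
      (xmax ^ 4 * (lamMax (A * Aᵀ)) ^ 2 / (xmin ^ 8 * (lamMin (A * Aᵀ)) ^ 4)) *
        frobSq (A * ((Matrix.diagonal xt) ^ 2 - (Matrix.diagonal x) ^ 2) * Aᵀ) := by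
  intro St S dS
  rcases Nat.eq_zero_or_pos m with hm | hm
  · subst hm
    simp [Matrix.trace, frobSq]
  haveI : Nonempty (Fin m) := ⟨⟨0, hm⟩⟩
  -- abbreviations
  set G : Matrix (Fin m) (Fin m) ℝ := A * Aᵀ with hGdef
  set Mt : Matrix (Fin m) (Fin m) ℝ := A * (Matrix.diagonal xt) ^ 2 * Aᵀ with hMtdef
  set M : Matrix (Fin m) (Fin m) ℝ := A * (Matrix.diagonal x) ^ 2 * Aᵀ with hMdef
  set D : Matrix (Fin m) (Fin m) ℝ := A * ((Matrix.diagonal xt) ^ 2 - (Matrix.diagonal x) ^ 2) * Aᵀ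
    with hDdef
  set a₀ : ℝ := lamMin G with ha₀def
  set b₀ : ℝ := lamMax G with hb₀def
  -- hermitian facts
  have htt : ∀ {p q : ℕ} (B : Matrix (Fin p) (Fin q) ℝ), Bᴴ = Bᵀ := fun B =>
    Matrix.conjTranspose_eq_transpose_of_trivial B
  have hG : G.IsHermitian := by
    rw [hGdef, ← htt A]; exact isHermitian_mul_conjTranspose_self A
  have hdsqt : ((Matrix.diagonal xt) ^ 2).IsHermitian := by
    rw [Matrix.diagonal_pow]; exact Matrix.isHermitian_diagonal _
  have hdsqx : ((Matrix.diagonal x) ^ 2).IsHermitian := by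
    rw [Matrix.diagonal_pow]; exact Matrix.isHermitian_diagonal _
  have hMt : Mt.IsHermitian := by
    rw [hMtdef, ← htt A]
    exact Matrix.isHermitian_mul_mul_conjTranspose A hdsqt
  have hD : D.IsHermitian := by
    rw [hDdef, ← htt A]
    exact Matrix.isHermitian_mul_mul_conjTranspose A (hdsqt.sub hdsqx)
  have hDt : Dᵀ = D := by rw [← htt D]; exact hD
  -- quadratic form computation
  have key : ∀ (y : Fin n → ℝ) (v : Fin m → ℝ),
      v ⬝ᵥ ((A * Matrix.diagonal y * Aᵀ) *ᵥ v) = ∑ j, y j * ((Aᵀ *ᵥ v) j) ^ 2 := by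
    intro y v
    rw [← mulVec_mulVec, ← mulVec_mulVec, Matrix.dotProduct_mulVec, ← Matrix.mulVec_transpose,
      dotProduct]
    refine Finset.sum_congr rfl fun j _ => ?_
    rw [mulVec_diagonal]
    ring
  have hGform : ∀ v : Fin m → ℝ, v ⬝ᵥ (G *ᵥ v) = ∑ j, ((Aᵀ *ᵥ v) j) ^ 2 := by
    intro v
    have h1 : G = A * Matrix.diagonal (fun _ : Fin n => (1 : ℝ)) * Aᵀ := by
      rw [hGdef, Matrix.diagonal_one, Matrix.mul_one]
    rw [h1, key]
    simp
  have hMtform : ∀ v : Fin m → ℝ, v ⬝ᵥ (Mt *ᵥ v) = ∑ j, (xt j) ^ 2 * ((Aᵀ *ᵥ v) j) ^ 2 := by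
    intro v
    have h1 : Mt = A * Matrix.diagonal (fun j => (xt j) ^ 2) * Aᵀ := by
      rw [hMtdef, Matrix.diagonal_pow]
      rfl
    rw [h1, key]
  -- spectrum facts for G
  have hspecG : spectrum ℝ G = Set.range hG.eigenvalues := hG.spectrum_real_eq_range_eigenvalues
  have hfinG : (Set.range hG.eigenvalues).Finite := Set.finite_range _
  have ha₀le : ∀ i, a₀ ≤ hG.eigenvalues i := by
    intro i
    rw [ha₀def]
    unfold lamMin
    rw [hspecG]
    exact csInf_le hfinG.bddBelow (Set.mem_range_self i)
  have hb₀ge : ∀ i, hG.eigenvalues i ≤ b₀ := by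
    intro i
    rw [hb₀def]
    unfold lamMax
    rw [hspecG]
    exact le_csSup hfinG.bddAbove (Set.mem_range_self i)
  -- unitary facts
  have unitary_facts : ∀ {p : ℕ} {H : Matrix (Fin p) (Fin p) ℝ} (hH : H.IsHermitian),
      ((hH.eigenvectorUnitary : Matrix (Fin p) (Fin p) ℝ) *
        (hH.eigenvectorUnitary : Matrix (Fin p) (Fin p) ℝ)ᵀ = 1 ∧
       (hH.eigenvectorUnitary : Matrix (Fin p) (Fin p) ℝ)ᵀ *
        (hH.eigenvectorUnitary : Matrix (Fin p) (Fin p) ℝ) = 1) := by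
    intro p H hH
    constructor
    · have h := (Matrix.mem_unitaryGroup_iff).mp (hH.eigenvectorUnitary).2
      rwa [Matrix.star_eq_conjTranspose, htt] at h
    · have h := (Matrix.mem_unitaryGroup_iff').mp (hH.eigenvectorUnitary).2
      rwa [Matrix.star_eq_conjTranspose, htt] at h
  have spec_decomp : ∀ {p : ℕ} {H : Matrix (Fin p) (Fin p) ℝ} (hH : H.IsHermitian),
      H = (hH.eigenvectorUnitary : Matrix (Fin p) (Fin p) ℝ) *
        Matrix.diagonal hH.eigenvalues *
        (hH.eigenvectorUnitary : Matrix (Fin p) (Fin p) ℝ)ᵀ := by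
    intro p H hH
    have := hH.spectral_theorem
    rwa [show (RCLike.ofReal ∘ hH.eigenvalues : Fin p → ℝ) = hH.eigenvalues by
        funext i; simp [RCLike.ofReal_real_eq_id],
      Unitary.conjStarAlgAut_apply,
      show (star (hH.eigenvectorUnitary : Matrix (Fin p) (Fin p) ℝ)) =
        (hH.eigenvectorUnitary : Matrix (Fin p) (Fin p) ℝ)ᵀ by
        rw [Matrix.star_eq_conjTranspose, htt]] at this
  -- Rayleigh bounds for G
  have hGq : ∀ v : Fin m → ℝ, a₀ * (v ⬝ᵥ v) ≤ v ⬝ᵥ (G *ᵥ v) ∧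
      v ⬝ᵥ (G *ᵥ v) ≤ b₀ * (v ⬝ᵥ v) := by
    intro v
    obtain ⟨hu1, hu2⟩ := unitary_facts hG
    have := rayleigh_of_decomp _ hu1 hu2 hG.eigenvalues a₀ b₀
      (fun i => ⟨ha₀le i, hb₀ge i⟩) v
    rwa [← spec_decomp hG] at this
  -- bounds on xt squares
  have hxt2 : ∀ j, xmin ^ 2 ≤ (xt j) ^ 2 ∧ (xt j) ^ 2 ≤ xmax ^ 2 := by
    intro j
    obtain ⟨h1, h2⟩ := hxt j
    constructor
    · exact pow_le_pow_left₀ hmin.le h1 2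
    · exact pow_le_pow_left₀ (hmin.le.trans h1) h2 2
  -- Rayleigh bounds for Mt
  set α : ℝ := xmin ^ 2 * a₀ with hαdef
  set β : ℝ := xmax ^ 2 * b₀ with hβdef
  have hMtq : ∀ v : Fin m → ℝ, α * (v ⬝ᵥ v) ≤ v ⬝ᵥ (Mt *ᵥ v) ∧
      v ⬝ᵥ (Mt *ᵥ v) ≤ β * (v ⬝ᵥ v) := by
    intro v
    obtain ⟨hg1, hg2⟩ := hGq v
    have hsum := hGform v
    have hmt := hMtform v
    constructor
    · calc α * (v ⬝ᵥ v) = xmin ^ 2 * (a₀ * (v ⬝ᵥ v)) := by ring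
      _ ≤ xmin ^ 2 * (v ⬝ᵥ (G *ᵥ v)) := by
          exact mul_le_mul_of_nonneg_left hg1 (sq_nonneg _)
      _ = ∑ j, xmin ^ 2 * ((Aᵀ *ᵥ v) j) ^ 2 := by rw [hsum, Finset.mul_sum]
      _ ≤ ∑ j, (xt j) ^ 2 * ((Aᵀ *ᵥ v) j) ^ 2 :=
          Finset.sum_le_sum fun j _ => mul_le_mul_of_nonneg_right (hxt2 j).1 (sq_nonneg _)
      _ = v ⬝ᵥ (Mt *ᵥ v) := hmt.symm
    · calc v ⬝ᵥ (Mt *ᵥ v) = ∑ j, (xt j) ^ 2 * ((Aᵀ *ᵥ v) j) ^ 2 := hmt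
      _ ≤ ∑ j, xmax ^ 2 * ((Aᵀ *ᵥ v) j) ^ 2 :=
          Finset.sum_le_sum fun j _ => mul_le_mul_of_nonneg_right (hxt2 j).2 (sq_nonneg _)
      _ = xmax ^ 2 * (v ⬝ᵥ (G *ᵥ v)) := by rw [hsum, Finset.mul_sum]
      _ ≤ xmax ^ 2 * (b₀ * (v ⬝ᵥ v)) := mul_le_mul_of_nonneg_left hg2 (sq_nonneg _)
      _ = β * (v ⬝ᵥ v) := by ring
  have hMtev : ∀ i, hMt.eigenvalues i ∈ Set.Icc α β :=
    eigenvalues_bounds_of_rayleigh hMt α β hMtq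
  -- positivity of a₀
  have hGpos : ∀ i, 0 < hG.eigenvalues i := by
    intro i
    set v : Fin m → ℝ := ⇑(hG.eigenvectorBasis i) with hv
    have hdot : v ⬝ᵥ v = 1 := eigvec_dot hG i
    have hquad : v ⬝ᵥ (G *ᵥ v) = hG.eigenvalues i := eigvec_quad hG i
    have hsum : ∑ j, ((Aᵀ *ᵥ v) j) ^ 2 = hG.eigenvalues i := by rw [← hGform v, hquad]
    rcases lt_or_ge 0 (hG.eigenvalues i) with h | h
    · exact h
    exfalso
    have hz : ∀ j ∈ Finset.univ, ((Aᵀ *ᵥ v) j) ^ 2 = 0 := by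
      intro j _
      have hnn : ∀ j ∈ Finset.univ, (0:ℝ) ≤ ((Aᵀ *ᵥ v) j) ^ 2 := fun j _ => sq_nonneg _
      have hle : ∑ j, ((Aᵀ *ᵥ v) j) ^ 2 ≤ 0 := hsum.le.trans h
      exact (Finset.sum_eq_zero_iff_of_nonneg hnn).mp
        (le_antisymm hle (Finset.sum_nonneg hnn)) j (Finset.mem_univ j)
    have hw0 : Aᵀ *ᵥ v = 0 := by
      funext j
      exact pow_eq_zero_iff two_ne_zero |>.mp (hz j (Finset.mem_univ j))
    have hMtv : Mt *ᵥ v = 0 := by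
      rw [hMtdef, ← mulVec_mulVec, ← mulVec_mulVec, hw0, mulVec_zero, mulVec_zero]
    have hv0 : v = 0 := by
      have h1 : Mt⁻¹ * Mt = 1 := Matrix.nonsing_inv_mul _ hinvt
      calc v = (Mt⁻¹ * Mt) *ᵥ v := by rw [h1, one_mulVec]
      _ = Mt⁻¹ *ᵥ (Mt *ᵥ v) := by rw [mulVec_mulVec]
      _ = 0 := by rw [hMtv, mulVec_zero]
    rw [hv0] at hdot
    simp at hdot
  have ha₀pos : 0 < a₀ := by
    have hmem : a₀ ∈ Set.range hG.eigenvalues := by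
      rw [ha₀def]
      unfold lamMin
      rw [hspecG]
      exact (Set.range_nonempty _).csInf_mem hfinG
    obtain ⟨i, hi⟩ := hmem
    rw [← hi]
    exact hGpos i
  have hab : a₀ ≤ b₀ := (ha₀le (Classical.arbitrary (Fin m))).trans
    (hb₀ge (Classical.arbitrary (Fin m)))
  have hb₀pos : 0 < b₀ := ha₀pos.trans_le hab
  have hαpos : 0 < α := mul_pos (pow_pos hmin 2) ha₀pos
  have hβpos : 0 < β := mul_pos (pow_pos (hmin.trans_le hmm) 2) hb₀pos
  -- inverse decomposition of Mt
  obtain ⟨hu1, hu2⟩ := unitary_facts hMt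
  set UM : Matrix (Fin m) (Fin m) ℝ := (hMt.eigenvectorUnitary : Matrix (Fin m) (Fin m) ℝ)
    with hUMdef
  have hMtdec : Mt = UM * Matrix.diagonal hMt.eigenvalues * UMᵀ := spec_decomp hMt
  have hdne : ∀ i, hMt.eigenvalues i ≠ 0 := fun i =>
    (hαpos.trans_le (hMtev i).1).ne'
  have hMtinv : Mt⁻¹ = UM * Matrix.diagonal (fun i => (hMt.eigenvalues i)⁻¹) * UMᵀ := by
    apply Matrix.inv_eq_right_inv
    calc Mt * (UM * Matrix.diagonal (fun i => (hMt.eigenvalues i)⁻¹) * UMᵀ)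
        = UM * Matrix.diagonal hMt.eigenvalues * (UMᵀ * UM) *
            Matrix.diagonal (fun i => (hMt.eigenvalues i)⁻¹) * UMᵀ := by
          nth_rewrite 1 [hMtdec]
          noncomm_ring
    _ = UM * (Matrix.diagonal hMt.eigenvalues *
            Matrix.diagonal (fun i => (hMt.eigenvalues i)⁻¹)) * UMᵀ := by
          rw [hu2]; noncomm_ring
    _ = 1 := by
          rw [Matrix.diagonal_mul_diagonal]
          have : (fun i => hMt.eigenvalues i * (hMt.eigenvalues i)⁻¹) =
              (fun _ : Fin m => (1:ℝ)) := by
            funext i; exact mul_inv_cancel₀ (hdne i)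
          rw [this, Matrix.diagonal_one, Matrix.mul_one, hu1]
  have hdinv : ∀ i, (hMt.eigenvalues i)⁻¹ ∈ Set.Icc β⁻¹ α⁻¹ := by
    intro i
    obtain ⟨h1, h2⟩ := hMtev i
    have hpos : 0 < hMt.eigenvalues i := hαpos.trans_le h1
    exact ⟨inv_anti₀ hpos h2, inv_anti₀ hαpos h1⟩
  -- trace bounds
  have tb := trace_conj_diag_bounds UM hu1 hu2 (fun i => (hMt.eigenvalues i)⁻¹) β⁻¹ α⁻¹
    (inv_nonneg.mpr hβpos.le) hdinv D hDt
  rw [← hMtinv] at tb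
  -- trace identity
  have hMMi : M * M⁻¹ = 1 := Matrix.mul_nonsing_inv _ hinv
  have hMiM : M⁻¹ * M = 1 := Matrix.nonsing_inv_mul _ hinv
  have hBMt : Mt⁻¹ * Mt = 1 := Matrix.nonsing_inv_mul _ hinvt
  have hSinv : S⁻¹ = M := Matrix.nonsing_inv_nonsing_inv _ hinv
  have hDMt : D = Mt - M := by
    rw [hDdef, hMtdef, hMdef, Matrix.mul_sub, Matrix.sub_mul]
  have hdS : dS = -(Mt⁻¹ * D * M⁻¹) := by
    have : Mt⁻¹ * D * M⁻¹ = M⁻¹ - Mt⁻¹ := by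
      calc Mt⁻¹ * D * M⁻¹ = (Mt⁻¹ * Mt - Mt⁻¹ * M) * M⁻¹ := by
            rw [hDMt, Matrix.mul_sub]
      _ = M⁻¹ - Mt⁻¹ * (M * M⁻¹) := by rw [hBMt, Matrix.sub_mul, Matrix.one_mul, mul_assoc]
      _ = M⁻¹ - Mt⁻¹ := by rw [hMMi, Matrix.mul_one]
    rw [this]
    show Mt⁻¹ - M⁻¹ = -(M⁻¹ - Mt⁻¹)
    rw [neg_sub]
  have hexpr : S⁻¹ * dS * S⁻¹ * dS = M * (Mt⁻¹ * D * Mt⁻¹ * D) * M⁻¹ := by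
    rw [hSinv, hdS]
    calc M * -(Mt⁻¹ * D * M⁻¹) * M * -(Mt⁻¹ * D * M⁻¹)
        = M * Mt⁻¹ * D * (M⁻¹ * M) * Mt⁻¹ * D * M⁻¹ := by noncomm_ring
    _ = M * (Mt⁻¹ * D * Mt⁻¹ * D) * M⁻¹ := by rw [hMiM]; noncomm_ring
  have hTI : (S⁻¹ * dS * S⁻¹ * dS).trace = (Mt⁻¹ * D * Mt⁻¹ * D).trace := by
    rw [hexpr, Matrix.trace_mul_cycle, ← Matrix.mul_assoc, hMiM, Matrix.one_mul]
  -- frobenius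
  have hF : frobSq D = (D * D).trace := (trace_sq_eq D hDt).symm
  have hFnn : 0 ≤ (D * D).trace := by
    rw [← hF, frobSq]
    exact Finset.sum_nonneg fun i _ => Finset.sum_nonneg fun j _ => sq_nonneg _
  -- core coefficient inequality
  have hcore : xmin ^ 4 * a₀ ^ 2 ≤ xmax ^ 4 * b₀ ^ 2 := by
    have h1 : xmin ^ 4 ≤ xmax ^ 4 := pow_le_pow_left₀ hmin.le hmm 4
    have h2 : a₀ ^ 2 ≤ b₀ ^ 2 := pow_le_pow_left₀ ha₀pos.le hab 2
    exact mul_le_mul h1 h2 (sq_nonneg _) (pow_nonneg (hmin.le.trans hmm) 4)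
  have hβsq : β⁻¹ ^ 2 = 1 / (xmax ^ 4 * b₀ ^ 2) := by
    rw [hβdef, inv_pow, one_div]
    congr 1
    ring
  have hαsq : α⁻¹ ^ 2 = 1 / (xmin ^ 4 * a₀ ^ 2) := by
    rw [hαdef, inv_pow, one_div]
    congr 1
    ring
  have hRHSposL : 0 < xmax ^ 8 * b₀ ^ 4 :=
    mul_pos (pow_pos (hmin.trans_le hmm) 8) (pow_pos hb₀pos 4)
  have hRHSposU : 0 < xmin ^ 8 * a₀ ^ 4 := mul_pos (pow_pos hmin 8) (pow_pos ha₀pos 4)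
  have hposL : 0 < xmax ^ 4 * b₀ ^ 2 :=
    mul_pos (pow_pos (hmin.trans_le hmm) 4) (pow_pos hb₀pos 2)
  have hposU : 0 < xmin ^ 4 * a₀ ^ 2 := mul_pos (pow_pos hmin 4) (pow_pos ha₀pos 2)
  have hcoefL : xmin ^ 4 * a₀ ^ 2 / (xmax ^ 8 * b₀ ^ 4) ≤ β⁻¹ ^ 2 := by
    rw [hβsq, div_le_div_iff₀ hRHSposL hposL]
    calc xmin ^ 4 * a₀ ^ 2 * (xmax ^ 4 * b₀ ^ 2) ≤ xmax ^ 4 * b₀ ^ 2 * (xmax ^ 4 * b₀ ^ 2) :=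
          mul_le_mul_of_nonneg_right hcore hposL.le
    _ = 1 * (xmax ^ 8 * b₀ ^ 4) := by ring
  have hcoefU : α⁻¹ ^ 2 ≤ xmax ^ 4 * b₀ ^ 2 / (xmin ^ 8 * a₀ ^ 4) := by
    rw [hαsq, div_le_div_iff₀ hposU hRHSposU]
    calc 1 * (xmin ^ 8 * a₀ ^ 4) = xmin ^ 4 * a₀ ^ 2 * (xmin ^ 4 * a₀ ^ 2) := by ring
    _ ≤ xmax ^ 4 * b₀ ^ 2 * (xmin ^ 4 * a₀ ^ 2) := mul_le_mul_of_nonneg_right hcore hposU.le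
  -- assemble
  constructor
  · rw [hTI]
    calc xmin ^ 4 * a₀ ^ 2 / (xmax ^ 8 * b₀ ^ 4) * frobSq D
        ≤ β⁻¹ ^ 2 * frobSq D := mul_le_mul_of_nonneg_right hcoefL (hF ▸ hFnn)
    _ = β⁻¹ ^ 2 * (D * D).trace := by rw [hF]
    _ ≤ (Mt⁻¹ * D * Mt⁻¹ * D).trace := tb.1
  · rw [hTI]
    calc (Mt⁻¹ * D * Mt⁻¹ * D).trace ≤ α⁻¹ ^ 2 * (D * D).trace := tb.2
    _ = α⁻¹ ^ 2 * frobSq D := by rw [hF]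
    _ ≤ xmax ^ 4 * b₀ ^ 2 / (xmin ^ 8 * a₀ ^ 4) * frobSq D :=
        mul_le_mul_of_nonneg_right hcoefU (hF ▸ hFnn)
end

section
/- Let x̂, x̃, x_o ∈ ℝ^n have entries in [x_min, x_max] with 0 < x_min ≤ x_max, and let A be an m×n real matrix such that Σ̂ = (A X̂² Aᵀ)^{-1}, Σ̃ = (A X̃² Aᵀ)^{-1}, and Σ_o = (A X_o² Aᵀ)^{-1} exist, where X̂ = diag(x̂), X̃ = diag(x̃), X_o = diag(x_o). Then every eigenvalue λ of Σ_o^{-1/2}(Σ̂ − Σ̃)Σ_o^{-1/2} satisfies |λ| ≤ x_max² λ_max²(AAᵀ) ‖x̂² − x̃²‖_∞ / (x_min⁴ λ_min²(AAᵀ)). -/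
open Matrix

/-- Entrywise sup-norm of a vector. -/
noncomputable def supNorm {n : ℕ} (v : Fin n → ℝ) : ℝ := ⨆ i, |v i|

/-- The old Mathlib `Matrix.PosSemidef.sqrt`, spelled out. -/
noncomputable def psdSqrt {n : ℕ} {M : Matrix (Fin n) (Fin n) ℝ} (hA : M.PosSemidef) :
    Matrix (Fin n) (Fin n) ℝ :=
  hA.1.eigenvectorUnitary.1 * diagonal (Real.sqrt ∘ hA.1.eigenvalues) *
    (star hA.1.eigenvectorUnitary : Matrix (Fin n) (Fin n) ℝ)

namespace SandwichAux

variable {m : ℕ}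

lemma ct_eq {I J : Type*} (M : Matrix I J ℝ) : Mᴴ = Mᵀ := by
  ext i j; simp [conjTranspose_apply]

lemma herm_of_symm {M : Matrix (Fin m) (Fin m) ℝ} (h : Mᵀ = M) : M.IsHermitian := by
  rw [IsHermitian, ct_eq]; exact h

lemma symm_of_herm {M : Matrix (Fin m) (Fin m) ℝ} (h : M.IsHermitian) : Mᵀ = M := by
  rw [← ct_eq]; exact h

lemma star_vec_eq (v : Fin m → ℝ) : star v = v := by
  funext i; simp

/-- transpose-mulVec exchange for dotProduct -/
lemma dot_swap {k l : ℕ} (M : Matrix (Fin k) (Fin l) ℝ) (x : Fin k → ℝ) (y : Fin l → ℝ) :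
    (Mᵀ *ᵥ x) ⬝ᵥ y = x ⬝ᵥ (M *ᵥ y) := by
  rw [mulVec_transpose, ← dotProduct_mulVec]

lemma exists_eigenvector {M : Matrix (Fin m) (Fin m) ℝ} {lam : ℝ}
    (h : lam ∈ spectrum ℝ M) : ∃ v : Fin m → ℝ, v ≠ 0 ∧ M *ᵥ v = lam • v := by
  rw [spectrum.mem_iff, Matrix.isUnit_iff_isUnit_det, isUnit_iff_ne_zero, not_not] at h
  obtain ⟨v, hv0, hv⟩ := (Matrix.exists_mulVec_eq_zero_iff).mpr h
  refine ⟨v, hv0, ?_⟩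
  have h2 : (lam • (1 : Matrix (Fin m) (Fin m) ℝ) - M) *ᵥ v = 0 := by
    rwa [Algebra.algebraMap_eq_smul_one] at hv
  rw [sub_mulVec, smul_mulVec, one_mulVec, sub_eq_zero] at h2
  exact h2.symm


section herm
variable {A : Matrix (Fin m) (Fin m) ℝ}

lemma unitary_dot {U : Matrix (Fin m) (Fin m) ℝ} (hU : U ∈ Matrix.unitaryGroup (Fin m) ℝ)
    (x y : Fin m → ℝ) : (U *ᵥ x) ⬝ᵥ (U *ᵥ y) = x ⬝ᵥ y := by
  have h2 : star U * U = 1 := (Matrix.mem_unitaryGroup_iff').mp hU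
  rw [Matrix.star_eq_conjTranspose, ct_eq] at h2
  have h3 := dot_swap Uᵀ x (U *ᵥ y)
  rw [transpose_transpose] at h3
  rw [h3, mulVec_mulVec, h2, one_mulVec]

lemma herm_quadform (hA : A.IsHermitian) (v : Fin m → ℝ) :
    ∃ c : Fin m → ℝ, v ⬝ᵥ (A *ᵥ v) = ∑ i, hA.eigenvalues i * (c i)^2 ∧ v ⬝ᵥ v = ∑ i, (c i)^2 := by
  classical
  set U : Matrix (Fin m) (Fin m) ℝ := (hA.eigenvectorUnitary : Matrix (Fin m) (Fin m) ℝ) with hUdef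
  have hUmem : U ∈ Matrix.unitaryGroup (Fin m) ℝ := hA.eigenvectorUnitary.2
  have hU1 : U * star U = 1 := (Matrix.mem_unitaryGroup_iff).mp hUmem
  set c : Fin m → ℝ := (star U) *ᵥ v with hc
  have hv : U *ᵥ c = v := by rw [hc, mulVec_mulVec, hU1, one_mulVec]
  have hdiag : (Matrix.diagonal (RCLike.ofReal ∘ hA.eigenvalues) : Matrix (Fin m) (Fin m) ℝ)
      = Matrix.diagonal hA.eigenvalues := by
    congr 1
  have hAv : A *ᵥ v = U *ᵥ (Matrix.diagonal hA.eigenvalues *ᵥ c) := by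
    conv_lhs => rw [hA.spectral_theorem, Unitary.conjStarAlgAut_apply]
    rw [hdiag, ← hUdef, ← mulVec_mulVec, ← hc, ← mulVec_mulVec]
  refine ⟨c, ?_, ?_⟩
  · rw [hAv, ← hv, unitary_dot hUmem]
    simp only [dotProduct, mulVec_diagonal]
    exact Finset.sum_congr rfl fun i _ => by ring
  · rw [← hv, unitary_dot hUmem]
    simp only [dotProduct]
    exact Finset.sum_congr rfl fun i _ => by ring


lemma dot_self_nonneg (v : Fin m → ℝ) : 0 ≤ v ⬝ᵥ v :=
  Finset.sum_nonneg fun i _ => mul_self_nonneg _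

lemma dot_self_pos {v : Fin m → ℝ} (hv : v ≠ 0) : 0 < v ⬝ᵥ v :=
  lt_of_le_of_ne (dot_self_nonneg v) fun h => hv (dotProduct_self_eq_zero.mp h.symm)

lemma herm_quad_between [Nonempty (Fin m)] (hA : A.IsHermitian) (w : Fin m → ℝ) :
    Finset.univ.inf' Finset.univ_nonempty hA.eigenvalues * (w ⬝ᵥ w) ≤ w ⬝ᵥ (A *ᵥ w) ∧
    w ⬝ᵥ (A *ᵥ w) ≤ Finset.univ.sup' Finset.univ_nonempty hA.eigenvalues * (w ⬝ᵥ w) := by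
  obtain ⟨c, h1, h2⟩ := herm_quadform hA w
  rw [h1, h2]
  constructor
  · rw [Finset.mul_sum]
    refine Finset.sum_le_sum fun i _ => ?_
    have := Finset.inf'_le hA.eigenvalues (Finset.mem_univ i)
    nlinarith [sq_nonneg (c i)]
  · rw [Finset.mul_sum]
    refine Finset.sum_le_sum fun i _ => ?_
    have := Finset.le_sup' hA.eigenvalues (Finset.mem_univ i)
    nlinarith [sq_nonneg (c i)]

lemma spectrum_subset_Icc [Nonempty (Fin m)] (hA : A.IsHermitian) {lam : ℝ}
    (hlam : lam ∈ spectrum ℝ A) :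
    Finset.univ.inf' Finset.univ_nonempty hA.eigenvalues ≤ lam ∧
    lam ≤ Finset.univ.sup' Finset.univ_nonempty hA.eigenvalues := by
  obtain ⟨v, hv, he⟩ := exists_eigenvector hlam
  have hvv := dot_self_pos hv
  have hq : v ⬝ᵥ (A *ᵥ v) = lam * (v ⬝ᵥ v) := by
    rw [he, dotProduct_smul, smul_eq_mul]
  obtain ⟨hl, hu⟩ := herm_quad_between hA v
  rw [hq] at hl hu
  exact ⟨le_of_mul_le_mul_right hl hvv, le_of_mul_le_mul_right hu hvv⟩

lemma lamMax_eq_sup' [Nonempty (Fin m)] (hA : A.IsHermitian) :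
    lamMax A = Finset.univ.sup' Finset.univ_nonempty hA.eigenvalues := by
  obtain ⟨i, -, hi⟩ := Finset.exists_mem_eq_sup' (Finset.univ_nonempty) hA.eigenvalues
  have hmem : Finset.univ.sup' Finset.univ_nonempty hA.eigenvalues ∈ spectrum ℝ A := by
    rw [hi]; exact hA.eigenvalues_mem_spectrum_real i
  refine le_antisymm (csSup_le ⟨_, hmem⟩ fun x hx => (spectrum_subset_Icc hA hx).2) ?_
  exact le_csSup ⟨_, fun x hx => (spectrum_subset_Icc hA hx).2⟩ hmem

lemma lamMin_eq_inf' [Nonempty (Fin m)] (hA : A.IsHermitian) :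
    lamMin A = Finset.univ.inf' Finset.univ_nonempty hA.eigenvalues := by
  obtain ⟨i, -, hi⟩ := Finset.exists_mem_eq_inf' (Finset.univ_nonempty) hA.eigenvalues
  have hmem : Finset.univ.inf' Finset.univ_nonempty hA.eigenvalues ∈ spectrum ℝ A := by
    rw [hi]; exact hA.eigenvalues_mem_spectrum_real i
  refine le_antisymm ?_ (le_csInf ⟨_, hmem⟩ fun x hx => (spectrum_subset_Icc hA hx).1)
  exact csInf_le ⟨_, fun x hx => (spectrum_subset_Icc hA hx).1⟩ hmem

lemma quad_le_lamMax [Nonempty (Fin m)] (hA : A.IsHermitian) (v : Fin m → ℝ) :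
    v ⬝ᵥ (A *ᵥ v) ≤ lamMax A * (v ⬝ᵥ v) := by
  rw [lamMax_eq_sup' hA]; exact (herm_quad_between hA v).2

lemma lamMin_quad_le [Nonempty (Fin m)] (hA : A.IsHermitian) (v : Fin m → ℝ) :
    lamMin A * (v ⬝ᵥ v) ≤ v ⬝ᵥ (A *ᵥ v) := by
  rw [lamMin_eq_inf' hA]; exact (herm_quad_between hA v).1

lemma lamMin_pos [Nonempty (Fin m)] (hP : A.PosDef) : 0 < lamMin A := by
  rw [lamMin_eq_inf' hP.1]
  obtain ⟨i, -, hi⟩ := Finset.exists_mem_eq_inf' (Finset.univ_nonempty) hP.1.eigenvalues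
  rw [hi]; exact hP.eigenvalues_pos i

lemma lamMax_pos [Nonempty (Fin m)] (hP : A.PosDef) : 0 < lamMax A := by
  have h1 := lamMin_pos hP
  have h2 : lamMin A ≤ lamMax A := by
    rw [lamMin_eq_inf' hP.1, lamMax_eq_sup' hP.1]
    have i := Classical.arbitrary (Fin m)
    exact le_trans (Finset.inf'_le _ (Finset.mem_univ i)) (Finset.le_sup' _ (Finset.mem_univ i))
  linarith

end herm

section psd
variable {n : ℕ}

lemma psd_quad {M : Matrix (Fin m) (Fin m) ℝ} (h : M.PosSemidef) (v : Fin m → ℝ) :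
    0 ≤ v ⬝ᵥ (M *ᵥ v) := by
  have := h.dotProduct_mulVec_nonneg v; rwa [star_vec_eq] at this

lemma conj_diag_psd (A : Matrix (Fin m) (Fin n) ℝ) {d : Fin n → ℝ} (hd : ∀ i, 0 ≤ d i) :
    (A * Matrix.diagonal d * Aᵀ).PosSemidef := by
  have h : (Matrix.diagonal d).PosSemidef := Matrix.PosSemidef.diagonal hd
  have h2 := h.mul_mul_conjTranspose_same A
  rwa [ct_eq] at h2

lemma diag_sub' (d e : Fin n → ℝ) :
    Matrix.diagonal (fun i => d i - e i) = Matrix.diagonal d - Matrix.diagonal e := by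
  ext i j
  by_cases hij : i = j <;> simp [Matrix.diagonal_apply, hij]

lemma quad_diff (A : Matrix (Fin m) (Fin n) ℝ) {d e : Fin n → ℝ} (h : ∀ i, d i ≤ e i)
    (v : Fin m → ℝ) :
    v ⬝ᵥ ((A * Matrix.diagonal d * Aᵀ) *ᵥ v) ≤ v ⬝ᵥ ((A * Matrix.diagonal e * Aᵀ) *ᵥ v) := by
  have hpsd := conj_diag_psd A (d := fun i => e i - d i) (fun i => sub_nonneg.2 (h i))
  have h0 := psd_quad hpsd v
  have hEq : A * Matrix.diagonal (fun i => e i - d i) * Aᵀ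
      = A * Matrix.diagonal e * Aᵀ - A * Matrix.diagonal d * Aᵀ := by
    rw [diag_sub', Matrix.mul_sub, Matrix.sub_mul]
  rw [hEq, sub_mulVec, dotProduct_sub] at h0
  linarith

lemma const_diag (A : Matrix (Fin m) (Fin n) ℝ) (c : ℝ) :
    A * Matrix.diagonal (fun _ : Fin n => c) * Aᵀ = c • (A * Aᵀ) := by
  have h1 : (Matrix.diagonal (fun _ : Fin n => c) : Matrix (Fin n) (Fin n) ℝ)
      = c • (1 : Matrix (Fin n) (Fin n) ℝ) := by
    ext i j
    by_cases hij : i = j <;> simp [Matrix.diagonal_apply, Matrix.one_apply, hij]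
  rw [h1, Matrix.mul_smul, Matrix.mul_one, Matrix.smul_mul]

lemma quad_smul (M : Matrix (Fin m) (Fin m) ℝ) (c : ℝ) (v : Fin m → ℝ) :
    v ⬝ᵥ ((c • M) *ᵥ v) = c * (v ⬝ᵥ (M *ᵥ v)) := by
  rw [Matrix.smul_mulVec, dotProduct_smul, smul_eq_mul]

lemma conj_symm_herm (A : Matrix (Fin m) (Fin n) ℝ) (d : Fin n → ℝ) :
    (A * Matrix.diagonal d * Aᵀ).IsHermitian := by
  apply herm_of_symm
  rw [Matrix.transpose_mul, Matrix.transpose_mul, Matrix.transpose_transpose,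
    Matrix.diagonal_transpose, Matrix.mul_assoc]

lemma sub_smul_one_psd {Q : Matrix (Fin m) (Fin m) ℝ} (hQ : Q.IsHermitian) {a : ℝ}
    (h : ∀ v, a * (v ⬝ᵥ v) ≤ v ⬝ᵥ (Q *ᵥ v)) : (Q - a • (1 : Matrix (Fin m) (Fin m) ℝ)).PosSemidef := by
  refine Matrix.PosSemidef.of_dotProduct_mulVec_nonneg ?_ ?_
  · apply herm_of_symm
    rw [Matrix.transpose_sub, Matrix.transpose_smul, Matrix.transpose_one, symm_of_herm hQ]
  · intro v
    rw [star_vec_eq, sub_mulVec, dotProduct_sub, Matrix.smul_mulVec, Matrix.one_mulVec,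
      dotProduct_smul, smul_eq_mul]
    have := h v
    linarith


lemma cauchy_schwarz_dot (w u : Fin m → ℝ) : (w ⬝ᵥ u)^2 ≤ (w ⬝ᵥ w) * (u ⬝ᵥ u) := by
  have h := Finset.sum_mul_sq_le_sq_mul_sq Finset.univ w u
  have e1 : w ⬝ᵥ w = ∑ i, w i ^ 2 := Finset.sum_congr rfl fun i _ => (sq (w i)).symm
  have e2 : u ⬝ᵥ u = ∑ i, u i ^ 2 := Finset.sum_congr rfl fun i _ => (sq (u i)).symm
  rw [e1, e2]
  exact h

lemma inv_sq_bound {Q : Matrix (Fin m) (Fin m) ℝ} (hQ : Q.IsHermitian)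
    (hdet : IsUnit Q.det) {a : ℝ} (ha : 0 < a)
    (h : ∀ v, a * (v ⬝ᵥ v) ≤ v ⬝ᵥ (Q *ᵥ v)) (w : Fin m → ℝ) :
    (Q⁻¹ *ᵥ w) ⬝ᵥ (Q⁻¹ *ᵥ w) ≤ (a⁻¹)^2 * (w ⬝ᵥ w) := by
  set S := Q⁻¹ with hS
  have hSsymm : Sᵀ = S := symm_of_herm hQ.inv
  have hpsd1 : (Q - a • (1 : Matrix (Fin m) (Fin m) ℝ)).PosSemidef := sub_smul_one_psd hQ h
  have hconj := hpsd1.mul_mul_conjTranspose_same S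
  rw [ct_eq, hSsymm] at hconj
  have hSQ : S * Q = 1 := Matrix.nonsing_inv_mul Q hdet
  have hkey : S * (Q - a • (1 : Matrix (Fin m) (Fin m) ℝ)) * S = S - a • (S * S) := by
    rw [Matrix.mul_sub, Matrix.mul_smul, Matrix.mul_one, hSQ, Matrix.sub_mul, Matrix.one_mul,
      Matrix.smul_mul]
  rw [hkey] at hconj
  set u := S *ᵥ w with hu
  have h1 : w ⬝ᵥ ((S * S) *ᵥ w) = u ⬝ᵥ u := by
    rw [← Matrix.mulVec_mulVec, ← hu, ← dot_swap S w u, hSsymm, ← hu]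
  have h0 := psd_quad hconj w
  rw [sub_mulVec, dotProduct_sub, Matrix.smul_mulVec, dotProduct_smul, smul_eq_mul,
    h1] at h0
  have h2 : a * (u ⬝ᵥ u) ≤ w ⬝ᵥ u := by linarith
  have hcs := cauchy_schwarz_dot w u
  have htn := dot_self_nonneg u
  have hsn := dot_self_nonneg w
  rcases eq_or_lt_of_le htn with ht0 | htp
  · rw [← ht0]
    positivity
  · have hsq : (a * (u ⬝ᵥ u))^2 ≤ (w ⬝ᵥ u)^2 := by
      apply sq_le_sq'
      · nlinarith
      · exact h2
    have hfin : a^2 * ((u ⬝ᵥ u) * (u ⬝ᵥ u)) ≤ (w ⬝ᵥ w) * (u ⬝ᵥ u) := by nlinarith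
    have ha2 : (0:ℝ) < a^2 := by positivity
    have h3 : a^2 * (u ⬝ᵥ u) ≤ w ⬝ᵥ w := by nlinarith
    rw [inv_pow, inv_mul_eq_div, le_div_iff₀ ha2]
    linarith

end psd

lemma quad_conj {n : ℕ} (A : Matrix (Fin m) (Fin n) ℝ) (D : Matrix (Fin n) (Fin n) ℝ)
    (v : Fin m → ℝ) :
    v ⬝ᵥ ((A * D * Aᵀ) *ᵥ v) = (Aᵀ *ᵥ v) ⬝ᵥ (D *ᵥ (Aᵀ *ᵥ v)) := by
  rw [← Matrix.mulVec_mulVec, ← Matrix.mulVec_mulVec, ← dot_swap A]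

lemma abs_dot (u : Fin m → ℝ) : (fun i => |u i|) ⬝ᵥ (fun i => |u i|) = u ⬝ᵥ u := by
  simp only [dotProduct, abs_mul_abs_self]

end SandwichAux

open SandwichAux in
set_option maxHeartbeats 1000000 in
/-- Every eigenvalue `λ` of `Σ₀^{-1/2}(Σ̂ − Σ̃)Σ₀^{-1/2}` satisfies
`|λ| ≤ x_max² λ_max²(AAᵀ) ‖x̂² − x̃²‖_∞ / (x_min⁴ λ_min²(AAᵀ))`, where
`Σ̂ = (A X̂² Aᵀ)⁻¹`, `Σ̃ = (A X̃² Aᵀ)⁻¹`, and `Σ₀^{-1/2}` is the positive square root of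
`Σ₀⁻¹ = A X₀² Aᵀ` (positive definite, being positive semidefinite and invertible). -/
theorem abs_eigenvalue_sandwich_bound {m n : ℕ} (A : Matrix (Fin m) (Fin n) ℝ)
    (xh xt xo : Fin n → ℝ) (xmin xmax : ℝ) (hmin : 0 < xmin) (hmm : xmin ≤ xmax)
    (hxh : ∀ i, xh i ∈ Set.Icc xmin xmax) (hxt : ∀ i, xt i ∈ Set.Icc xmin xmax)
    (hxo : ∀ i, xo i ∈ Set.Icc xmin xmax)
    (hinvh : IsUnit (A * (Matrix.diagonal xh) ^ 2 * Aᵀ).det)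
    (hinvt : IsUnit (A * (Matrix.diagonal xt) ^ 2 * Aᵀ).det)
    (hpos : (A * (Matrix.diagonal xo) ^ 2 * Aᵀ).PosDef) :
    let Sh := (A * (Matrix.diagonal xh) ^ 2 * Aᵀ)⁻¹
    let St := (A * (Matrix.diagonal xt) ^ 2 * Aᵀ)⁻¹
    let sqrtSoInv := psdSqrt hpos.posSemidef
    ∀ lam ∈ spectrum ℝ (sqrtSoInv * (Sh - St) * sqrtSoInv),
      |lam| ≤ xmax ^ 2 * (lamMax (A * Aᵀ)) ^ 2 *
          supNorm (fun i => (xh i) ^ 2 - (xt i) ^ 2) /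
        (xmin ^ 4 * (lamMin (A * Aᵀ)) ^ 2) := by
  intro Sh St S lam hlam
  rcases Nat.eq_zero_or_pos m with hm0 | hm
  · haveI : IsEmpty (Fin m) := by subst hm0; infer_instance
    haveI : Subsingleton (Matrix (Fin m) (Fin m) ℝ) :=
      ⟨fun a b => by ext i j; exact (IsEmpty.false i).elim⟩
    exact absurd (isUnit_of_subsingleton _) (spectrum.mem_iff.mp hlam)
  haveI : Nonempty (Fin m) := Fin.pos_iff_nonempty.mp hm
  classical
  -- diagonal squares
  have hdsq : ∀ x : Fin n → ℝ, (Matrix.diagonal x) ^ 2 = Matrix.diagonal (fun i => x i ^ 2) := by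
    intro x
    rw [sq, Matrix.diagonal_mul_diagonal]
    congr 1; funext i; ring
  set W := A * Aᵀ with hWdef
  set Qh := A * Matrix.diagonal (fun i => xh i ^ 2) * Aᵀ with hQhdef
  set Qt := A * Matrix.diagonal (fun i => xt i ^ 2) * Aᵀ with hQtdef
  set Qo := A * Matrix.diagonal (fun i => xo i ^ 2) * Aᵀ with hQodef
  have hQh' : A * (Matrix.diagonal xh) ^ 2 * Aᵀ = Qh := by rw [hdsq]
  have hQt' : A * (Matrix.diagonal xt) ^ 2 * Aᵀ = Qt := by rw [hdsq]
  have hQo' : A * (Matrix.diagonal xo) ^ 2 * Aᵀ = Qo := by rw [hdsq]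
  have hSh : Sh = Qh⁻¹ := by rw [show Sh = (A * (Matrix.diagonal xh) ^ 2 * Aᵀ)⁻¹ from rfl, hQh']
  have hSt : St = Qt⁻¹ := by rw [show St = (A * (Matrix.diagonal xt) ^ 2 * Aᵀ)⁻¹ from rfl, hQt']
  have hdeth : IsUnit Qh.det := by rwa [hQh'] at hinvh
  have hdett : IsUnit Qt.det := by rwa [hQt'] at hinvt
  have hposo : Qo.PosDef := by rwa [hQo'] at hpos
  have hSherm : S.IsHermitian := by
    apply herm_of_symm
    show (psdSqrt hpos.posSemidef)ᵀ = psdSqrt hpos.posSemidef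
    unfold psdSqrt
    rw [Matrix.star_eq_conjTranspose, ct_eq, Matrix.transpose_mul,
      Matrix.transpose_mul, Matrix.transpose_transpose, Matrix.diagonal_transpose]
    exact (Matrix.mul_assoc _ _ _).symm
  have hSsymm : Sᵀ = S := symm_of_herm hSherm
  have hSS : S * S = Qo := by
    rw [← hQo']
    have hU : star (hpos.posSemidef.1.eigenvectorUnitary : Matrix (Fin m) (Fin m) ℝ) *
        (hpos.posSemidef.1.eigenvectorUnitary : Matrix (Fin m) (Fin m) ℝ) = 1 :=
      (Matrix.mem_unitaryGroup_iff').mp hpos.posSemidef.1.eigenvectorUnitary.2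
    have hD : diagonal (Real.sqrt ∘ hpos.posSemidef.1.eigenvalues) *
        diagonal (Real.sqrt ∘ hpos.posSemidef.1.eigenvalues) =
        diagonal (RCLike.ofReal ∘ hpos.posSemidef.1.eigenvalues) := by
      rw [Matrix.diagonal_mul_diagonal]; congr 1; funext i
      exact Real.mul_self_sqrt (hpos.posSemidef.eigenvalues_nonneg i)
    conv_rhs => rw [hpos.posSemidef.1.spectral_theorem, Unitary.conjStarAlgAut_apply]
    show psdSqrt hpos.posSemidef * psdSqrt hpos.posSemidef = _
    unfold psdSqrt
    rw [← hD]
    rw [show ∀ X Y Z V : Matrix (Fin m) (Fin m) ℝ, X * Y * Z * (V * Y * Z) = X * Y * (Z * V) * Y * Z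
      from fun _ _ _ _ => by simp only [Matrix.mul_assoc], hU, Matrix.mul_one,
      Matrix.mul_assoc _ (diagonal _) (diagonal _)]
  clear_value Sh St S W Qh Qt Qo
  -- W is positive definite
  have hWherm : W.IsHermitian := by
    apply herm_of_symm
    rw [hWdef, Matrix.transpose_mul, Matrix.transpose_transpose]
  have hWpd : W.PosDef := by
    refine Matrix.PosDef.of_dotProduct_mulVec_pos hWherm fun v hv => ?_
    rw [star_vec_eq]
    have hAv : Aᵀ *ᵥ v ≠ 0 := by
      intro h0
      have hp := hposo.dotProduct_mulVec_pos hv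
      rw [star_vec_eq, hQodef, quad_conj, h0] at hp
      simp at hp
    have : v ⬝ᵥ (W *ᵥ v) = (Aᵀ *ᵥ v) ⬝ᵥ (Aᵀ *ᵥ v) := by
      rw [hWdef, ← Matrix.mulVec_mulVec, ← dot_swap A]
    rw [this]
    exact dot_self_pos hAv
  set l := lamMin W with hldef
  set L := lamMax W with hLdef
  have hl_pos : 0 < l := lamMin_pos hWpd
  have hL_pos : 0 < L := lamMax_pos hWpd
  set a := xmin ^ 2 * l with hadef
  set b := xmax ^ 2 * L with hbdef
  have ha_pos : 0 < a := by positivity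
  clear_value l L a b
  -- quadratic form lower bounds for Qh, Qt and upper bound for Qo
  have hlb : ∀ (x : Fin n → ℝ), (∀ i, x i ∈ Set.Icc xmin xmax) →
      ∀ v, a * (v ⬝ᵥ v) ≤ v ⬝ᵥ ((A * Matrix.diagonal (fun i => x i ^ 2) * Aᵀ) *ᵥ v) := by
    intro x hx v
    have h1 : ∀ i, (fun _ : Fin n => xmin ^ 2) i ≤ (fun i => x i ^ 2) i := by
      intro i
      exact pow_le_pow_left₀ hmin.le (hx i).1 2
    have h2 := quad_diff A h1 v
    rw [const_diag, quad_smul, ← hWdef] at h2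
    have h3 := lamMin_quad_le hWherm v
    rw [← hldef] at h3
    have h4 : a * (v ⬝ᵥ v) ≤ xmin ^ 2 * (v ⬝ᵥ (W *ᵥ v)) := by
      rw [hadef, mul_assoc]
      exact mul_le_mul_of_nonneg_left h3 (by positivity)
    exact le_trans h4 h2
  have hub : ∀ v, v ⬝ᵥ (Qo *ᵥ v) ≤ b * (v ⬝ᵥ v) := by
    intro v
    have h1 : ∀ i, (fun i => xo i ^ 2) i ≤ (fun _ : Fin n => xmax ^ 2) i := by
      intro i
      have h0 := (hxo i).1
      have h1 := (hxo i).2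
      show xo i ^ 2 ≤ xmax ^ 2
      nlinarith
    have h2 := quad_diff A h1 v
    rw [const_diag, quad_smul, ← hWdef, ← hQodef] at h2
    have h3 := quad_le_lamMax hWherm v
    rw [← hLdef] at h3
    have h4 : xmax ^ 2 * (v ⬝ᵥ (W *ᵥ v)) ≤ b * (v ⬝ᵥ v) := by
      rw [hbdef, mul_assoc]
      exact mul_le_mul_of_nonneg_left h3 (by nlinarith)
    exact le_trans (h2.trans_eq rfl) h4
  -- Hermitian facts
  have hQhherm : Qh.IsHermitian := by rw [hQhdef]; exact conj_symm_herm A _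
  have hQtherm : Qt.IsHermitian := by rw [hQtdef]; exact conj_symm_herm A _
  have hShsymm : Shᵀ = Sh := by rw [hSh]; exact symm_of_herm hQhherm.inv
  -- eigenvector
  obtain ⟨v, hv, hev⟩ := exists_eigenvector hlam
  have hvv := dot_self_pos hv
  set w := S *ᵥ v with hwdef
  set p := Sh *ᵥ w with hpdef
  set q := St *ᵥ w with hqdef
  set u := Aᵀ *ᵥ p with hudef
  set z := Aᵀ *ᵥ q with hzdef
  set d : Fin n → ℝ := fun i => xt i ^ 2 - xh i ^ 2 with hddef
  clear_value w p q u z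
  have hQdiff : Qt - Qh = A * Matrix.diagonal d * Aᵀ := by
    rw [hQtdef, hQhdef, hddef, diag_sub', Matrix.mul_sub, Matrix.sub_mul]
  have hShQh : Sh * Qh = 1 := by rw [hSh]; exact Matrix.nonsing_inv_mul Qh hdeth
  have hQtSt : Qt * St = 1 := by rw [hSt]; exact Matrix.mul_nonsing_inv Qt hdett
  have hdiff : Sh - St = Sh * (A * Matrix.diagonal d * Aᵀ) * St := by
    rw [← hQdiff, Matrix.mul_sub, Matrix.sub_mul, Matrix.mul_assoc Sh Qt St, hQtSt,
      Matrix.mul_one, hShQh, Matrix.one_mul]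
  -- main identity
  have hlam_eq : lam * (v ⬝ᵥ v) = u ⬝ᵥ (Matrix.diagonal d *ᵥ z) := by
    have e1 : v ⬝ᵥ ((S * (Sh - St) * S) *ᵥ v) = lam * (v ⬝ᵥ v) := by
      rw [hev, dotProduct_smul, smul_eq_mul]
    rw [← e1, ← Matrix.mulVec_mulVec, ← Matrix.mulVec_mulVec, ← dot_swap S, hSsymm, ← hwdef,
      hdiff, ← Matrix.mulVec_mulVec, ← Matrix.mulVec_mulVec, ← dot_swap Sh, hShsymm, ← hpdef,
      ← hqdef, ← Matrix.mulVec_mulVec, ← Matrix.mulVec_mulVec, ← dot_swap A, ← hudef, ← hzdef]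
  -- sup norm facts
  set sd := supNorm (fun i => xh i ^ 2 - xt i ^ 2) with hsddef
  have hsd0' : 0 ≤ sd := Real.iSup_nonneg fun i => abs_nonneg _
  have hsd0 : 0 ≤ sd := hsd0'
  clear_value sd
  have hd_le : ∀ i, |d i| ≤ sd := by
    intro i
    have e : |d i| = |xh i ^ 2 - xt i ^ 2| := abs_sub_comm _ _
    rw [e, hsddef]
    exact le_ciSup (f := fun i => |xh i ^ 2 - xt i ^ 2|)
      (Set.Finite.bddAbove (Set.finite_range _)) i
  -- norms of p, q
  have hlbh : ∀ v, a * (v ⬝ᵥ v) ≤ v ⬝ᵥ (Qh *ᵥ v) := by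
    rw [hQhdef]; exact hlb xh hxh
  have hlbt : ∀ v, a * (v ⬝ᵥ v) ≤ v ⬝ᵥ (Qt *ᵥ v) := by
    rw [hQtdef]; exact hlb xt hxt
  have hp2 : p ⬝ᵥ p ≤ a⁻¹ ^ 2 * (w ⬝ᵥ w) := by
    rw [hpdef, hSh]
    exact inv_sq_bound hQhherm hdeth ha_pos hlbh w
  have hq2 : q ⬝ᵥ q ≤ a⁻¹ ^ 2 * (w ⬝ᵥ w) := by
    rw [hqdef, hSt]
    exact inv_sq_bound hQtherm hdett ha_pos hlbt w
  have hwn := dot_self_nonneg w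
  set c := L * (a⁻¹ ^ 2 * (w ⬝ᵥ w)) with hcdef
  clear_value c
  have hc0 : 0 ≤ c := by
    rw [hcdef]
    exact mul_nonneg hL_pos.le (mul_nonneg (by positivity) hwn)
  have hu2 : u ⬝ᵥ u ≤ c := by
    have e : u ⬝ᵥ u = p ⬝ᵥ (W *ᵥ p) := by
      rw [hudef, dot_swap A, Matrix.mulVec_mulVec, ← hWdef]
    rw [e, hcdef]
    calc p ⬝ᵥ (W *ᵥ p) ≤ L * (p ⬝ᵥ p) := hLdef ▸ quad_le_lamMax hWherm p
      _ ≤ L * (a⁻¹ ^ 2 * (w ⬝ᵥ w)) := mul_le_mul_of_nonneg_left hp2 hL_pos.le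
  have hz2 : z ⬝ᵥ z ≤ c := by
    have e : z ⬝ᵥ z = q ⬝ᵥ (W *ᵥ q) := by
      rw [hzdef, dot_swap A, Matrix.mulVec_mulVec, ← hWdef]
    rw [e, hcdef]
    calc q ⬝ᵥ (W *ᵥ q) ≤ L * (q ⬝ᵥ q) := hLdef ▸ quad_le_lamMax hWherm q
      _ ≤ L * (a⁻¹ ^ 2 * (w ⬝ᵥ w)) := mul_le_mul_of_nonneg_left hq2 hL_pos.le
  have hww : w ⬝ᵥ w ≤ b * (v ⬝ᵥ v) := by
    have e : w ⬝ᵥ w = v ⬝ᵥ (Qo *ᵥ v) := by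
      calc w ⬝ᵥ w = (Sᵀ *ᵥ v) ⬝ᵥ w := by rw [hSsymm, ← hwdef]
        _ = v ⬝ᵥ (S *ᵥ w) := dot_swap S v w
        _ = v ⬝ᵥ (Qo *ᵥ v) := by rw [hwdef, Matrix.mulVec_mulVec, hSS]
    rw [e]
    exact hub v
  -- the diagonal middle bound
  have habs : |u ⬝ᵥ (Matrix.diagonal d *ᵥ z)| ≤ sd * c := by
    have e : u ⬝ᵥ (Matrix.diagonal d *ᵥ z) = ∑ i, d i * (u i * z i) := by
      simp only [dotProduct, Matrix.mulVec_diagonal]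
      exact Finset.sum_congr rfl fun i _ => by ring
    rw [e]
    have step : ∑ i, |u i| * |z i| ≤ c := by
      have hcs := cauchy_schwarz_dot (fun i => |u i|) (fun i => |z i|)
      rw [abs_dot, abs_dot] at hcs
      have h1 : (u ⬝ᵥ u) * (z ⬝ᵥ z) ≤ c * c :=
        mul_le_mul hu2 hz2 (dot_self_nonneg z) hc0
      have h3 : 0 ≤ ∑ i, |u i| * |z i| :=
        Finset.sum_nonneg fun i _ => by positivity
      have h2 : ((fun i => |u i|) ⬝ᵥ fun i => |z i|) = ∑ i, |u i| * |z i| := rfl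
      rw [h2] at hcs
      nlinarith
    calc |∑ i, d i * (u i * z i)| ≤ ∑ i, |d i * (u i * z i)| :=
          Finset.abs_sum_le_sum_abs _ _
      _ ≤ ∑ i, sd * (|u i| * |z i|) := by
          refine Finset.sum_le_sum fun i _ => ?_
          rw [abs_mul, abs_mul]
          exact mul_le_mul_of_nonneg_right (hd_le i) (by positivity)
      _ = sd * ∑ i, |u i| * |z i| := by rw [Finset.mul_sum]
      _ ≤ sd * c := mul_le_mul_of_nonneg_left step hsd0
  -- put everything together
  have hfin : |lam| * (v ⬝ᵥ v) ≤ sd * c := by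
    rw [← abs_of_nonneg hvv.le, ← abs_mul, hlam_eq]
    exact habs
  have hc_le : c ≤ L * (a⁻¹ ^ 2 * (b * (v ⬝ᵥ v))) := by
    rw [hcdef]
    refine mul_le_mul_of_nonneg_left (mul_le_mul_of_nonneg_left hww (by positivity)) hL_pos.le
  have hstep : |lam| * (v ⬝ᵥ v) ≤ (sd * (L * (a⁻¹ ^ 2 * b))) * (v ⬝ᵥ v) := by
    calc |lam| * (v ⬝ᵥ v) ≤ sd * c := hfin
      _ ≤ sd * (L * (a⁻¹ ^ 2 * (b * (v ⬝ᵥ v)))) := mul_le_mul_of_nonneg_left hc_le hsd0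
      _ = (sd * (L * (a⁻¹ ^ 2 * b))) * (v ⬝ᵥ v) := by ring
  have hK : |lam| ≤ sd * (L * (a⁻¹ ^ 2 * b)) := le_of_mul_le_mul_right hstep hvv
  have hEq : sd * (L * (a⁻¹ ^ 2 * b)) = xmax ^ 2 * L ^ 2 * sd / (xmin ^ 4 * l ^ 2) := by
    rw [hadef, hbdef]
    have h1 : xmin ≠ 0 := ne_of_gt hmin
    have h2 : l ≠ 0 := ne_of_gt hl_pos
    field_simp
  rw [← hEq]
  exact hK
end

section
/- Let x̂, x̃, x_o ∈ ℝ^n have entries in [x_min, x_max] with 0 < x_min ≤ x_max, and let A be an m×n real matrix such that Σ̂ = (A X̂² Aᵀ)^{-1} and Σ̃ = (A X̃² Aᵀ)^{-1} exist, where X̂ = diag(x̂), X̃ = diag(x̃), X_o = diag(x_o). Let w₁,…,w_L ∈ ℝ^n and y_ℓ = A X_o w_ℓ. Then |(1/(L σ_w²)) Σ_{ℓ=1}^L y_ℓᵀ (Σ̂ − Σ̃) y_ℓ| ≤ (x_max² λ_max²(AAᵀ) ‖x̂² − x̃²‖_∞ / (x_min⁴ λ_min²(AAᵀ))) · (1 +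 (1/(L σ_w²)) Σ_{ℓ=1}^L w_ℓᵀ w_ℓ). -/
open Matrix

lemma eig_le_lamMax {k : ℕ} {M : Matrix (Fin k) (Fin k) ℝ} (hM : M.IsHermitian) (i : Fin k) :
    hM.eigenvalues i ≤ lamMax M := by
  rw [lamMax, hM.spectrum_real_eq_range_eigenvalues]
  exact le_csSup ((Set.finite_range _).bddAbove) (Set.mem_range_self i)

lemma lamMin_le_eig {k : ℕ} {M : Matrix (Fin k) (Fin k) ℝ} (hM : M.IsHermitian) (i : Fin k) :
    lamMin M ≤ hM.eigenvalues i := by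
  rw [lamMin, hM.spectrum_real_eq_range_eigenvalues]
  exact csInf_le ((Set.finite_range _).bddBelow) (Set.mem_range_self i)

lemma quadform_decomp {k : ℕ} {M : Matrix (Fin k) (Fin k) ℝ} (hM : M.IsHermitian)
    (v : Fin k → ℝ) :
    ∃ p : Fin k → ℝ, v ⬝ᵥ M *ᵥ v = ∑ i, hM.eigenvalues i * p i ^ 2 ∧ v ⬝ᵥ v = ∑ i, p i ^ 2 := by
  set U : Matrix (Fin k) (Fin k) ℝ := (hM.eigenvectorUnitary : Matrix (Fin k) (Fin k) ℝ) with hU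
  have hstar : star U = Uᵀ := U.conjTranspose_eq_transpose_of_trivial
  have hUU : U * Uᵀ = 1 := by
    rw [← hstar]; exact (Matrix.mem_unitaryGroup_iff).mp hM.eigenvectorUnitary.2
  set p : Fin k → ℝ := Uᵀ *ᵥ v with hp
  have hvv : v ⬝ᵥ v = ∑ i, p i ^ 2 := by
    have : p ⬝ᵥ p = v ⬝ᵥ v := by
      rw [hp, dotProduct_mulVec, vecMul_transpose, mulVec_mulVec, hUU, one_mulVec]
    rw [← this]; simp [dotProduct, sq]
  have hD : (Matrix.diagonal (RCLike.ofReal ∘ hM.eigenvalues) : Matrix (Fin k) (Fin k) ℝ)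
      = Matrix.diagonal hM.eigenvalues := by
    congr 1
  have hMv : v ⬝ᵥ M *ᵥ v = ∑ i, hM.eigenvalues i * p i ^ 2 := by
    conv_lhs => rw [hM.spectral_theorem, Unitary.conjStarAlgAut_apply]
    rw [hstar, hD, ← mulVec_mulVec, ← mulVec_mulVec, dotProduct_mulVec, ← hU,
      ← mulVec_transpose, ← hp]
    simp only [dotProduct, mulVec_diagonal]
    exact Finset.sum_congr rfl fun i _ => by ring
  exact ⟨p, hMv, hvv⟩

lemma quadform_le_lamMax {k : ℕ} {M : Matrix (Fin k) (Fin k) ℝ} (hM : M.IsHermitian)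
    (v : Fin k → ℝ) : v ⬝ᵥ M *ᵥ v ≤ lamMax M * (v ⬝ᵥ v) := by
  obtain ⟨p, h1, h2⟩ := quadform_decomp hM v
  rw [h1, h2, Finset.mul_sum]
  exact Finset.sum_le_sum fun i _ =>
    mul_le_mul_of_nonneg_right (eig_le_lamMax hM i) (sq_nonneg _)

lemma lamMin_quadform_le {k : ℕ} {M : Matrix (Fin k) (Fin k) ℝ} (hM : M.IsHermitian)
    (v : Fin k → ℝ) : lamMin M * (v ⬝ᵥ v) ≤ v ⬝ᵥ M *ᵥ v := by
  obtain ⟨p, h1, h2⟩ := quadform_decomp hM v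
  rw [h1, h2, Finset.mul_sum]
  exact Finset.sum_le_sum fun i _ =>
    mul_le_mul_of_nonneg_right (lamMin_le_eig hM i) (sq_nonneg _)

lemma le_lamMin_of_quadform {k : ℕ} (hk : 0 < k) {M : Matrix (Fin k) (Fin k) ℝ}
    (hM : M.IsHermitian) {c : ℝ} (h : ∀ v : Fin k → ℝ, c * (v ⬝ᵥ v) ≤ v ⬝ᵥ M *ᵥ v) :
    c ≤ lamMin M := by
  have : Nonempty (Fin k) := ⟨⟨0, hk⟩⟩
  rw [lamMin, hM.spectrum_real_eq_range_eigenvalues]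
  refine le_csInf (Set.range_nonempty _) ?_
  rintro x ⟨i, rfl⟩
  set v : Fin k → ℝ := ⇑(hM.eigenvectorBasis i) with hv
  have hmv : M *ᵥ v = hM.eigenvalues i • v := hM.mulVec_eigenvectorBasis i
  have hunit : v ⬝ᵥ v = 1 := by
    have hn : ‖hM.eigenvectorBasis i‖ = 1 := hM.eigenvectorBasis.orthonormal.1 i
    rw [EuclideanSpace.norm_eq] at hn
    have h5 : ∑ j, ‖hM.eigenvectorBasis i j‖ ^ 2 = 1 := Real.sqrt_eq_one.mp hn
    have h4 : v ⬝ᵥ v = ∑ j, v j ^ 2 := by simp [dotProduct, pow_two]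
    rw [h4]
    simpa [Real.norm_eq_abs, sq_abs] using h5
  have h2 := h v
  rw [hmv] at h2
  have h3 : v ⬝ᵥ (hM.eigenvalues i • v) = hM.eigenvalues i * (v ⬝ᵥ v) := by
    simp [dotProduct, Finset.mul_sum]; exact Finset.sum_congr rfl fun j _ => by ring
  rw [h3, hunit] at h2
  simpa using h2

lemma lamMin_pos_of_posDef {k : ℕ} (hk : 0 < k) {M : Matrix (Fin k) (Fin k) ℝ}
    (hM : M.PosDef) : 0 < lamMin M := by
  have : Nonempty (Fin k) := ⟨⟨0, hk⟩⟩
  have hfin : (spectrum ℝ M).Finite := M.finite_real_spectrum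
  have hne : (spectrum ℝ M).Nonempty := by
    rw [hM.1.spectrum_real_eq_range_eigenvalues]; exact Set.range_nonempty _
  have hmem := hne.csInf_mem hfin
  rw [hM.1.spectrum_real_eq_range_eigenvalues] at hmem
  obtain ⟨i, hi⟩ := hmem
  rw [lamMin, hM.1.spectrum_real_eq_range_eigenvalues, ← hi]
  exact hM.eigenvalues_pos i

lemma dot_self_nn {k : ℕ} (v : Fin k → ℝ) : 0 ≤ v ⬝ᵥ v :=
  Finset.sum_nonneg fun i _ => mul_self_nonneg _

lemma dot_sq_le {k : ℕ} (u v : Fin k → ℝ) : (u ⬝ᵥ v) ^ 2 ≤ (u ⬝ᵥ u) * (v ⬝ᵥ v) := by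
  have h := Finset.sum_mul_sq_le_sq_mul_sq Finset.univ u v
  simpa [dotProduct, pow_two] using h

lemma sandwich_diag {m n : ℕ} (A : Matrix (Fin m) (Fin n) ℝ) (d : Fin n → ℝ)
    (u v : Fin m → ℝ) :
    u ⬝ᵥ (A * Matrix.diagonal d * Aᵀ) *ᵥ v = ∑ i, d i * ((Aᵀ *ᵥ u) i * (Aᵀ *ᵥ v) i) := by
  rw [← mulVec_mulVec, ← mulVec_mulVec, dotProduct_mulVec, ← mulVec_transpose]
  simp only [dotProduct, mulVec_diagonal]
  exact Finset.sum_congr rfl fun i _ => by ring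

lemma sandwich_B {m n : ℕ} (A : Matrix (Fin m) (Fin n) ℝ) (u v : Fin m → ℝ) :
    u ⬝ᵥ (A * Aᵀ) *ᵥ v = (Aᵀ *ᵥ u) ⬝ᵥ (Aᵀ *ᵥ v) := by
  rw [← mulVec_mulVec, dotProduct_mulVec, ← mulVec_transpose]

lemma alpha_sq_dot_le {k : ℕ} {M : Matrix (Fin k) (Fin k) ℝ} (hM : M.IsHermitian)
    {α : ℝ} (hα : 0 < α) (hmin : α ≤ lamMin M) (a yv : Fin k → ℝ) (hMa : M *ᵥ a = yv) :
    α ^ 2 * (a ⬝ᵥ a) ≤ yv ⬝ᵥ yv := by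
  have ht : 0 ≤ a ⬝ᵥ a := dot_self_nn a
  have hY : 0 ≤ yv ⬝ᵥ yv := dot_self_nn yv
  have h3 : α * (a ⬝ᵥ a) ≤ a ⬝ᵥ yv := by
    have h0 := lamMin_quadform_le hM a
    rw [hMa] at h0
    calc α * (a ⬝ᵥ a) ≤ lamMin M * (a ⬝ᵥ a) := mul_le_mul_of_nonneg_right hmin ht
    _ ≤ a ⬝ᵥ yv := h0
  have h4 : (a ⬝ᵥ yv) ^ 2 ≤ (a ⬝ᵥ a) * (yv ⬝ᵥ yv) := dot_sq_le a yv
  have h5 : (α * (a ⬝ᵥ a)) ^ 2 ≤ (a ⬝ᵥ a) * (yv ⬝ᵥ yv) :=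
    le_trans (pow_le_pow_left₀ (mul_nonneg hα.le ht) h3 2) h4
  rcases ht.eq_or_lt with h | h
  · rw [← h]; simpa using hY
  · exact le_of_mul_le_mul_right (by nlinarith [h5]) h

lemma norm_mulVec_le {m n : ℕ} (A : Matrix (Fin m) (Fin n) ℝ)
    (hB : (A * Aᵀ).IsHermitian) (hlam : 0 ≤ lamMax (A * Aᵀ)) (u : Fin n → ℝ) :
    (A *ᵥ u) ⬝ᵥ (A *ᵥ u) ≤ lamMax (A * Aᵀ) * (u ⬝ᵥ u) := by
  set yv := A *ᵥ u with hyv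
  have hs : 0 ≤ yv ⬝ᵥ yv := dot_self_nn yv
  have e1 : yv ⬝ᵥ yv = (Aᵀ *ᵥ yv) ⬝ᵥ u := by
    conv_lhs => rw [hyv]
    rw [show yv ⬝ᵥ A *ᵥ u = (Aᵀ *ᵥ yv) ⬝ᵥ u by
      rw [dotProduct_mulVec, ← mulVec_transpose]]
  have e2 : ((Aᵀ *ᵥ yv) ⬝ᵥ u) ^ 2 ≤ ((Aᵀ *ᵥ yv) ⬝ᵥ (Aᵀ *ᵥ yv)) * (u ⬝ᵥ u) := dot_sq_le _ _
  have e3 : (Aᵀ *ᵥ yv) ⬝ᵥ (Aᵀ *ᵥ yv) = yv ⬝ᵥ (A * Aᵀ) *ᵥ yv := (sandwich_B A yv yv).symm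
  have e4 : yv ⬝ᵥ (A * Aᵀ) *ᵥ yv ≤ lamMax (A * Aᵀ) * (yv ⬝ᵥ yv) := quadform_le_lamMax hB yv
  have e5 : (yv ⬝ᵥ yv) ^ 2 ≤ lamMax (A * Aᵀ) * (yv ⬝ᵥ yv) * (u ⬝ᵥ u) := by
    calc (yv ⬝ᵥ yv) ^ 2 = ((Aᵀ *ᵥ yv) ⬝ᵥ u) ^ 2 := by rw [← e1]
    _ ≤ ((Aᵀ *ᵥ yv) ⬝ᵥ (Aᵀ *ᵥ yv)) * (u ⬝ᵥ u) := e2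
    _ ≤ lamMax (A * Aᵀ) * (yv ⬝ᵥ yv) * (u ⬝ᵥ u) :=
        mul_le_mul_of_nonneg_right (e3 ▸ e4) (dot_self_nn u)
  rcases hs.eq_or_lt with h | h
  · rw [← h]; exact mul_nonneg hlam (dot_self_nn u)
  · exact le_of_mul_le_mul_right (by nlinarith [e5]) h

lemma dot_symm_mulVec {k : ℕ} {S : Matrix (Fin k) (Fin k) ℝ} (hS : Sᵀ = S)
    (v z : Fin k → ℝ) : v ⬝ᵥ S *ᵥ z = (S *ᵥ v) ⬝ᵥ z := by
  rw [dotProduct_mulVec, ← mulVec_transpose, hS]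

lemma combine_arith {q s c PP RR aa bb Y W lam al xm : ℝ}
    (habs : |q| ≤ c * s) (hcs : s ^ 2 ≤ PP * RR)
    (hPP : PP ≤ lam * aa) (hRR : RR ≤ lam * bb)
    (haa : al ^ 2 * aa ≤ Y) (hbb : al ^ 2 * bb ≤ Y)
    (hY : Y ≤ lam * (xm ^ 2 * W))
    (hc : 0 ≤ c) (hal : 0 < al) (hlam : 0 < lam)
    (hRRnn : 0 ≤ RR) (haann : 0 ≤ aa) (hbbnn : 0 ≤ bb)
    (hYnn : 0 ≤ Y) (hWnn : 0 ≤ W) (hsnn : 0 ≤ s) :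
    |q| * al ^ 2 ≤ c * (lam ^ 2 * (xm ^ 2 * W)) := by
  have e1 : |q| ^ 2 ≤ c ^ 2 * (PP * RR) := by
    calc |q| ^ 2 ≤ (c * s) ^ 2 := pow_le_pow_left₀ (abs_nonneg q) habs 2
    _ = c ^ 2 * s ^ 2 := by ring
    _ ≤ c ^ 2 * (PP * RR) := mul_le_mul_of_nonneg_left hcs (sq_nonneg c)
  have e2 : PP * RR ≤ lam ^ 2 * (aa * bb) := by
    calc PP * RR ≤ (lam * aa) * (lam * bb) :=
      mul_le_mul hPP hRR hRRnn (by positivity)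
    _ = lam ^ 2 * (aa * bb) := by ring
  have e3 : (al ^ 2 * aa) * (al ^ 2 * bb) ≤ Y * Y :=
    mul_le_mul haa hbb (by positivity) hYnn
  have e4 : Y * Y ≤ (lam * (xm ^ 2 * W)) * (lam * (xm ^ 2 * W)) :=
    mul_le_mul hY hY hYnn (by positivity)
  have e5 : (|q| * al ^ 2) ^ 2 ≤ (c * (lam ^ 2 * (xm ^ 2 * W))) ^ 2 := by
    have t1 : |q| ^ 2 ≤ c ^ 2 * (lam ^ 2 * (aa * bb)) :=
      le_trans e1 (mul_le_mul_of_nonneg_left e2 (sq_nonneg c))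
    calc (|q| * al ^ 2) ^ 2 = |q| ^ 2 * (al ^ 2) ^ 2 := by ring
    _ ≤ (c ^ 2 * (lam ^ 2 * (aa * bb))) * (al ^ 2) ^ 2 :=
        mul_le_mul_of_nonneg_right t1 (by positivity)
    _ = c ^ 2 * lam ^ 2 * ((al ^ 2 * aa) * (al ^ 2 * bb)) := by ring
    _ ≤ c ^ 2 * lam ^ 2 * (Y * Y) := mul_le_mul_of_nonneg_left e3 (by positivity)
    _ ≤ c ^ 2 * lam ^ 2 * ((lam * (xm ^ 2 * W)) * (lam * (xm ^ 2 * W))) :=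
        mul_le_mul_of_nonneg_left e4 (by positivity)
    _ = (c * (lam ^ 2 * (xm ^ 2 * W))) ^ 2 := by ring
  have hqnn : 0 ≤ |q| * al ^ 2 := by positivity
  have hrhs : 0 ≤ c * (lam ^ 2 * (xm ^ 2 * W)) := by positivity
  nlinarith [e5, hqnn, hrhs]


set_option maxHeartbeats 1000000 in
/-- Deterministic bound on the empirical quadratic form of `Σ̂ − Σ̃`:
`|(1/(Lσw²)) ∑ₗ yₗᵀ(Σ̂ − Σ̃)yₗ| ≤ (x_max² λ_max²(AAᵀ) ‖x̂² − x̃²‖_∞ / (x_min⁴ λ_min²(AAᵀ)))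
· (1 + (1/(Lσw²)) ∑ₗ wₗᵀwₗ)`, where `yₗ = A X₀ wₗ`. -/
theorem quadform_diff_bound {m n L : ℕ} (A : Matrix (Fin m) (Fin n) ℝ)
    (xh xt xo : Fin n → ℝ) (xmin xmax σw : ℝ) (hmin : 0 < xmin) (hmm : xmin ≤ xmax)
    (hσw : 0 < σw) (hL : 0 < L)
    (hxh : ∀ i, xh i ∈ Set.Icc xmin xmax) (hxt : ∀ i, xt i ∈ Set.Icc xmin xmax)
    (hxo : ∀ i, xo i ∈ Set.Icc xmin xmax)
    (hinvh : IsUnit (A * (Matrix.diagonal xh) ^ 2 * Aᵀ).det)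
    (hinvt : IsUnit (A * (Matrix.diagonal xt) ^ 2 * Aᵀ).det)
    (w : Fin L → Fin n → ℝ) :
    let Sh := (A * (Matrix.diagonal xh) ^ 2 * Aᵀ)⁻¹
    let St := (A * (Matrix.diagonal xt) ^ 2 * Aᵀ)⁻¹
    let y : Fin L → Fin m → ℝ := fun ℓ => A.mulVec ((Matrix.diagonal xo).mulVec (w ℓ))
    |(1 / ((L : ℝ) * σw ^ 2)) * ∑ ℓ, (y ℓ) ⬝ᵥ (Sh - St).mulVec (y ℓ)| ≤
      (xmax ^ 2 * (lamMax (A * Aᵀ)) ^ 2 * supNorm (fun i => (xh i) ^ 2 - (xt i) ^ 2) /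
          (xmin ^ 4 * (lamMin (A * Aᵀ)) ^ 2)) *
        (1 + (1 / ((L : ℝ) * σw ^ 2)) * ∑ ℓ, (w ℓ) ⬝ᵥ (w ℓ)) := by
  intro Sh St y
  have hLR : (0:ℝ) < (L:ℝ) := Nat.cast_pos.mpr hL
  have hLpos : (0:ℝ) < (L:ℝ) * σw ^ 2 := by positivity
  have hfac : 0 < 1 / ((L:ℝ) * σw ^ 2) := by positivity
  have hcnn : 0 ≤ supNorm (fun i => xh i ^ 2 - xt i ^ 2) :=
    Real.iSup_nonneg fun i => abs_nonneg _
  have hwnn : ∀ ℓ, 0 ≤ w ℓ ⬝ᵥ w ℓ := fun ℓ => dot_self_nn _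
  have hsum_nn : 0 ≤ (1 / ((L:ℝ) * σw ^ 2)) * ∑ ℓ, w ℓ ⬝ᵥ w ℓ :=
    mul_nonneg hfac.le (Finset.sum_nonneg fun ℓ _ => hwnn ℓ)
  rcases Nat.eq_zero_or_pos m with hm0 | hmpos
  · subst hm0
    have hz : ∀ ℓ : Fin L, (y ℓ) ⬝ᵥ (Sh - St) *ᵥ (y ℓ) = 0 := fun ℓ => by
      simp [dotProduct]
    simp only [hz, Finset.sum_const_zero, mul_zero, abs_zero]
    have hC : 0 ≤ xmax ^ 2 * lamMax (A * Aᵀ) ^ 2 * supNorm (fun i => xh i ^ 2 - xt i ^ 2) /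
        (xmin ^ 4 * lamMin (A * Aᵀ) ^ 2) :=
      div_nonneg (mul_nonneg (mul_nonneg (sq_nonneg _) (sq_nonneg _)) hcnn) (by positivity)
    exact mul_nonneg hC (by linarith)
  · set c := supNorm (fun i => xh i ^ 2 - xt i ^ 2) with hc
    set C := xmax ^ 2 * lamMax (A * Aᵀ) ^ 2 * c / (xmin ^ 4 * lamMin (A * Aᵀ) ^ 2) with hCdef
    have hdh : (Matrix.diagonal xh) ^ 2 = Matrix.diagonal (fun i => xh i ^ 2) := by
      rw [Matrix.diagonal_pow]; rfl
    have hdt : (Matrix.diagonal xt) ^ 2 = Matrix.diagonal (fun i => xt i ^ 2) := by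
      rw [Matrix.diagonal_pow]; rfl
    set Mh := A * Matrix.diagonal (fun i => xh i ^ 2) * Aᵀ with hMh
    set Mt := A * Matrix.diagonal (fun i => xt i ^ 2) * Aᵀ with hMt
    have hdeth : IsUnit Mh.det := by rw [hMh, ← hdh]; exact hinvh
    have hdett : IsUnit Mt.det := by rw [hMt, ← hdt]; exact hinvt
    have hShdef : Sh = Mh⁻¹ := by rw [hMh, ← hdh]
    have hStdef : St = Mt⁻¹ := by rw [hMt, ← hdt]
    have hBh : (A * Aᵀ).IsHermitian := by
      have hAt : Aᵀ = Aᴴ := (Matrix.conjTranspose_eq_transpose_of_trivial A).symm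
      rw [hAt]; exact Matrix.isHermitian_mul_conjTranspose_self A
    have hMhT : Mhᵀ = Mh := by
      rw [hMh]
      simp [Matrix.transpose_mul, Matrix.diagonal_transpose, Matrix.mul_assoc]
    have hMtT : Mtᵀ = Mt := by
      rw [hMt]
      simp [Matrix.transpose_mul, Matrix.diagonal_transpose, Matrix.mul_assoc]
    have hMhherm : Mh.IsHermitian := by
      show Mhᴴ = Mh
      rw [Matrix.conjTranspose_eq_transpose_of_trivial, hMhT]
    have hMtherm : Mt.IsHermitian := by
      show Mtᴴ = Mt
      rw [Matrix.conjTranspose_eq_transpose_of_trivial, hMtT]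
    have hAtinj : ∀ u : Fin m → ℝ, Aᵀ *ᵥ u = 0 → u = 0 := by
      intro u hu
      have h1 : Mh *ᵥ u = 0 := by
        rw [hMh, ← Matrix.mulVec_mulVec, hu, Matrix.mulVec_zero]
      have hinj : Function.Injective Mh.mulVec :=
        Matrix.mulVec_injective_iff_isUnit.mpr ((Matrix.isUnit_iff_isUnit_det Mh).mpr hdeth)
      exact hinj (h1.trans (Matrix.mulVec_zero Mh).symm)
    have hBpd : (A * Aᵀ).PosDef := by
      refine Matrix.PosDef.of_dotProduct_mulVec_pos hBh fun u hu => ?_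
      have key : star u ⬝ᵥ ((A * Aᵀ) *ᵥ u) = (Aᵀ *ᵥ u) ⬝ᵥ (Aᵀ *ᵥ u) := by
        rw [star_trivial]; exact sandwich_B A u u
      rw [key]
      have hne0 : Aᵀ *ᵥ u ≠ 0 := fun h => hu (hAtinj u h)
      rcases (dot_self_nn (Aᵀ *ᵥ u)).eq_or_lt with h | h
      · exact absurd ((dotProduct_self_eq_zero).mp h.symm) hne0
      · exact h
    have hlmin : 0 < lamMin (A * Aᵀ) := lamMin_pos_of_posDef hmpos hBpd
    have hlmax : 0 < lamMax (A * Aᵀ) := by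
      have i : Fin m := ⟨0, hmpos⟩
      calc (0:ℝ) < lamMin (A * Aᵀ) := hlmin
      _ ≤ hBh.eigenvalues i := lamMin_le_eig hBh i
      _ ≤ lamMax (A * Aᵀ) := eig_le_lamMax hBh i
    set al := xmin ^ 2 * lamMin (A * Aᵀ) with halpha
    have halpos : 0 < al := mul_pos (pow_pos hmin 2) hlmin
    have quadlow : ∀ (x' : Fin n → ℝ), (∀ i, xmin ≤ x' i) → ∀ v : Fin m → ℝ,
        al * (v ⬝ᵥ v) ≤ v ⬝ᵥ (A * Matrix.diagonal (fun i => x' i ^ 2) * Aᵀ) *ᵥ v := by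
      intro x' hx' v
      rw [sandwich_diag]
      calc al * (v ⬝ᵥ v) = xmin ^ 2 * (lamMin (A * Aᵀ) * (v ⬝ᵥ v)) := by rw [halpha]; ring
      _ ≤ xmin ^ 2 * (v ⬝ᵥ (A * Aᵀ) *ᵥ v) :=
          mul_le_mul_of_nonneg_left (lamMin_quadform_le hBh v) (sq_nonneg xmin)
      _ = xmin ^ 2 * ((Aᵀ *ᵥ v) ⬝ᵥ (Aᵀ *ᵥ v)) := by rw [sandwich_B]
      _ = ∑ i, xmin ^ 2 * ((Aᵀ *ᵥ v) i * (Aᵀ *ᵥ v) i) := by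
          rw [dotProduct, Finset.mul_sum]
      _ ≤ ∑ i, x' i ^ 2 * ((Aᵀ *ᵥ v) i * (Aᵀ *ᵥ v) i) :=
          Finset.sum_le_sum fun i _ => mul_le_mul_of_nonneg_right
            (by nlinarith [hx' i, hmin]) (mul_self_nonneg _)
    have hMhmin : al ≤ lamMin Mh :=
      le_lamMin_of_quadform hmpos hMhherm (quadlow xh fun i => (hxh i).1)
    have hMtmin : al ≤ lamMin Mt :=
      le_lamMin_of_quadform hmpos hMtherm (quadlow xt fun i => (hxt i).1)
    set d : Fin n → ℝ := fun i => xt i ^ 2 - xh i ^ 2 with hd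
    have hdc : ∀ i, |d i| ≤ c := by
      intro i
      have h2 : (fun j => |xh j ^ 2 - xt j ^ 2|) i ≤ ⨆ j, |xh j ^ 2 - xt j ^ 2| :=
        le_ciSup (Set.Finite.bddAbove
          (Set.finite_range (fun j => |xh j ^ 2 - xt j ^ 2|))) i
      calc |d i| = |xh i ^ 2 - xt i ^ 2| := by
            simp only [hd]; exact abs_sub_comm _ _
      _ ≤ ⨆ j, |xh j ^ 2 - xt j ^ 2| := by simpa using h2
      _ = c := by rw [hc]; rfl
    have hdiff : Mt - Mh = A * Matrix.diagonal d * Aᵀ := by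
      rw [hMt, hMh, ← Matrix.sub_mul, ← Matrix.mul_sub, Matrix.diagonal_sub]
    have hSdiff : Sh - St = Sh * (A * Matrix.diagonal d * Aᵀ) * St := by
      rw [← hdiff, hShdef, hStdef]
      have e1 : Mh⁻¹ * (Mt - Mh) * Mt⁻¹ = Mh⁻¹ * (Mt * Mt⁻¹) - Mh⁻¹ * Mh * Mt⁻¹ := by
        rw [Matrix.mul_sub, Matrix.sub_mul, Matrix.mul_assoc]
      rw [e1, Matrix.mul_nonsing_inv _ hdett, Matrix.nonsing_inv_mul _ hdeth,
        Matrix.mul_one, Matrix.one_mul]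
    have hShsym : (Mh⁻¹)ᵀ = Mh⁻¹ := by
      rw [Matrix.transpose_nonsing_inv, hMhT]
    have key : ∀ ℓ, |y ℓ ⬝ᵥ (Sh - St) *ᵥ y ℓ| ≤ C * (w ℓ ⬝ᵥ w ℓ) := by
      intro ℓ
      set u := Matrix.diagonal xo *ᵥ w ℓ with hu
      have hyl : y ℓ = A *ᵥ u := rfl
      set a := Mh⁻¹ *ᵥ y ℓ with ha
      set b := Mt⁻¹ *ᵥ y ℓ with hb
      have hq : y ℓ ⬝ᵥ (Sh - St) *ᵥ y ℓ = ∑ i, d i * ((Aᵀ *ᵥ a) i * (Aᵀ *ᵥ b) i) := by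
        rw [hSdiff, hShdef, hStdef, ← Matrix.mulVec_mulVec, ← Matrix.mulVec_mulVec,
          ← hb, dot_symm_mulVec hShsym, ← ha, sandwich_diag]
      have hPPb : (Aᵀ *ᵥ a) ⬝ᵥ (Aᵀ *ᵥ a) ≤ lamMax (A * Aᵀ) * (a ⬝ᵥ a) := by
        rw [← sandwich_B]; exact quadform_le_lamMax hBh a
      have hRRb : (Aᵀ *ᵥ b) ⬝ᵥ (Aᵀ *ᵥ b) ≤ lamMax (A * Aᵀ) * (b ⬝ᵥ b) := by
        rw [← sandwich_B]; exact quadform_le_lamMax hBh b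
      have hMa : Mh *ᵥ a = y ℓ := by
        rw [ha, Matrix.mulVec_mulVec, Matrix.mul_nonsing_inv _ hdeth, Matrix.one_mulVec]
      have hMb : Mt *ᵥ b = y ℓ := by
        rw [hb, Matrix.mulVec_mulVec, Matrix.mul_nonsing_inv _ hdett, Matrix.one_mulVec]
      have haa : al ^ 2 * (a ⬝ᵥ a) ≤ y ℓ ⬝ᵥ y ℓ :=
        alpha_sq_dot_le hMhherm halpos hMhmin a (y ℓ) hMa
      have hbb : al ^ 2 * (b ⬝ᵥ b) ≤ y ℓ ⬝ᵥ y ℓ :=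
        alpha_sq_dot_le hMtherm halpos hMtmin b (y ℓ) hMb
      have hY : y ℓ ⬝ᵥ y ℓ ≤ lamMax (A * Aᵀ) * (xmax ^ 2 * (w ℓ ⬝ᵥ w ℓ)) := by
        rw [hyl]
        have h2 : u ⬝ᵥ u ≤ xmax ^ 2 * (w ℓ ⬝ᵥ w ℓ) := by
          rw [hu]
          simp only [dotProduct, Matrix.mulVec_diagonal]
          rw [Finset.mul_sum]
          refine Finset.sum_le_sum fun i _ => ?_
          have h3 : xo i ^ 2 ≤ xmax ^ 2 := by nlinarith [(hxo i).1, (hxo i).2, hmin]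
          nlinarith [mul_self_nonneg (w ℓ i), h3]
        calc (A *ᵥ u) ⬝ᵥ (A *ᵥ u) ≤ lamMax (A * Aᵀ) * (u ⬝ᵥ u) :=
            norm_mulVec_le A hBh hlmax.le u
        _ ≤ lamMax (A * Aᵀ) * (xmax ^ 2 * (w ℓ ⬝ᵥ w ℓ)) :=
            mul_le_mul_of_nonneg_left h2 hlmax.le
      have habs : |y ℓ ⬝ᵥ (Sh - St) *ᵥ y ℓ| ≤
          c * ∑ i, |(Aᵀ *ᵥ a) i| * |(Aᵀ *ᵥ b) i| := by
        rw [hq]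
        calc |∑ i, d i * ((Aᵀ *ᵥ a) i * (Aᵀ *ᵥ b) i)|
            ≤ ∑ i, |d i * ((Aᵀ *ᵥ a) i * (Aᵀ *ᵥ b) i)| := Finset.abs_sum_le_sum_abs _ _
        _ = ∑ i, |d i| * (|(Aᵀ *ᵥ a) i| * |(Aᵀ *ᵥ b) i|) := by
            refine Finset.sum_congr rfl fun i _ => ?_
            rw [abs_mul, abs_mul]
        _ ≤ ∑ i, c * (|(Aᵀ *ᵥ a) i| * |(Aᵀ *ᵥ b) i|) :=
            Finset.sum_le_sum fun i _ => mul_le_mul_of_nonneg_right (hdc i) (by positivity)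
        _ = c * ∑ i, |(Aᵀ *ᵥ a) i| * |(Aᵀ *ᵥ b) i| := (Finset.mul_sum _ _ _).symm
      have hcs : (∑ i, |(Aᵀ *ᵥ a) i| * |(Aᵀ *ᵥ b) i|) ^ 2 ≤
          ((Aᵀ *ᵥ a) ⬝ᵥ (Aᵀ *ᵥ a)) * ((Aᵀ *ᵥ b) ⬝ᵥ (Aᵀ *ᵥ b)) := by
        have h := Finset.sum_mul_sq_le_sq_mul_sq Finset.univ
          (fun i => |(Aᵀ *ᵥ a) i|) (fun i => |(Aᵀ *ᵥ b) i|)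
        simpa [dotProduct, pow_two, abs_mul_abs_self] using h
      have hsnn : 0 ≤ ∑ i, |(Aᵀ *ᵥ a) i| * |(Aᵀ *ᵥ b) i| :=
        Finset.sum_nonneg fun i _ => mul_nonneg (abs_nonneg _) (abs_nonneg _)
      have hcomb := combine_arith habs hcs hPPb hRRb haa hbb hY hcnn halpos hlmax
        (dot_self_nn (Aᵀ *ᵥ b)) (dot_self_nn a) (dot_self_nn b) (dot_self_nn (y ℓ))
        (hwnn ℓ) hsnn
      rw [hCdef, div_mul_eq_mul_div, le_div_iff₀
        (mul_pos (pow_pos hmin 4) (pow_pos hlmin 2))]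
      rw [halpha] at hcomb
      nlinarith [hcomb]
    have hsum : |∑ ℓ, y ℓ ⬝ᵥ (Sh - St) *ᵥ y ℓ| ≤ C * ∑ ℓ, w ℓ ⬝ᵥ w ℓ := by
      calc |∑ ℓ, y ℓ ⬝ᵥ (Sh - St) *ᵥ y ℓ| ≤ ∑ ℓ, |y ℓ ⬝ᵥ (Sh - St) *ᵥ y ℓ| :=
          Finset.abs_sum_le_sum_abs _ _
      _ ≤ ∑ ℓ, C * (w ℓ ⬝ᵥ w ℓ) := Finset.sum_le_sum fun ℓ _ => key ℓ
      _ = C * ∑ ℓ, w ℓ ⬝ᵥ w ℓ := (Finset.mul_sum _ _ _).symm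
    have hCnn : 0 ≤ C := by
      rw [hCdef]
      exact div_nonneg (mul_nonneg (mul_nonneg (sq_nonneg _) (sq_nonneg _)) hcnn)
        (by positivity)
    calc |1 / ((L:ℝ) * σw ^ 2) * ∑ ℓ, y ℓ ⬝ᵥ (Sh - St) *ᵥ y ℓ|
        = (1 / ((L:ℝ) * σw ^ 2)) * |∑ ℓ, y ℓ ⬝ᵥ (Sh - St) *ᵥ y ℓ| := by
          rw [abs_mul, abs_of_pos hfac]
      _ ≤ (1 / ((L:ℝ) * σw ^ 2)) * (C * ∑ ℓ, w ℓ ⬝ᵥ w ℓ) :=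
          mul_le_mul_of_nonneg_left hsum hfac.le
      _ = C * ((1 / ((L:ℝ) * σw ^ 2)) * ∑ ℓ, w ℓ ⬝ᵥ w ℓ) := by ring
      _ ≤ C * (1 + (1 / ((L:ℝ) * σw ^ 2)) * ∑ ℓ, w ℓ ⬝ᵥ w ℓ) :=
          mul_le_mul_of_nonneg_left (by linarith) hCnn
end

section
/- Let x̃, x_o ∈ ℝ^n have entries in [x_min, x_max] with 0 < x_min ≤ x_max, let X̃ = diag(x̃), X_o = diag(x_o), and let A be an m×n real matrix such that Σ̃ = (A X̃² Aᵀ)^{-1} and Σ_o = (A X_o² Aᵀ)^{-1} exist; set ΔΣ̃ = Σ̃ − Σ_o. Then the spectral norm satisfies ‖X_o Aᵀ ΔΣ̃ A X_o‖₂ ≤ x_max² σ_max(A)² λ_max(AAᵀ) ‖x_o² − x̃²‖_∞ / (x_min⁴ λ_min²(AAᵀ)). -/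
open Matrix

/-- Spectral (operator) norm of a real matrix: its largest singular value `√(λ_max(M Mᵀ))`. -/
noncomputable def specNorm {m n : ℕ} (M : Matrix (Fin m) (Fin n) ℝ) : ℝ :=
  Real.sqrt (sSup (spectrum ℝ (M * Mᵀ)))

open scoped Matrix.Norms.L2Operator

section Helpers

variable {k : ℕ}

private lemma dot_eq_inner (u v : Fin k → ℝ) :
    u ⬝ᵥ v = (inner ℝ ((WithLp.equiv 2 (Fin k → ℝ)).symm u) ((WithLp.equiv 2 (Fin k → ℝ)).symm v) : ℝ) := by
  simp [PiLp.inner_apply, dotProduct, WithLp.equiv_symm_apply, PiLp.toLp_apply, mul_comm]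

private lemma onb_dot_self (b : OrthonormalBasis (Fin k) ℝ (EuclideanSpace ℝ (Fin k))) (i : Fin k) :
    (WithLp.equiv 2 (Fin k → ℝ)) (b i) ⬝ᵥ (WithLp.equiv 2 (Fin k → ℝ)) (b i) = 1 := by
  rw [dot_eq_inner]
  simp only [Equiv.symm_apply_apply]
  rw [real_inner_self_eq_norm_sq, b.orthonormal.1 i]
  norm_num

private lemma l2norm_diagonal_le (v : Fin k → ℝ) (c : ℝ) (hc : 0 ≤ c)
    (h : ∀ i, |v i| ≤ c) : ‖(diagonal v : Matrix (Fin k) (Fin k) ℝ)‖ ≤ c := by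
  rw [Matrix.l2_opNorm_def]
  refine ContinuousLinearMap.opNorm_le_bound _ hc (fun x => ?_)
  simp only [LinearEquiv.trans_apply, LinearMap.coe_toContinuousLinearMap',
    Matrix.toEuclideanLin_apply]
  rw [EuclideanSpace.norm_eq, EuclideanSpace.norm_eq]
  rw [← Real.sqrt_sq hc, ← Real.sqrt_mul (by positivity)]
  apply Real.sqrt_le_sqrt
  rw [Finset.mul_sum]
  apply Finset.sum_le_sum
  intro i _
  simp only [WithLp.equiv_symm_apply, PiLp.toLp_apply, Matrix.mulVec_diagonal, WithLp.equiv_apply]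
  rw [Real.norm_eq_abs, Real.norm_eq_abs, abs_mul, mul_pow]
  exact mul_le_mul_of_nonneg_right (pow_le_pow_left₀ (abs_nonneg _) (h i) 2) (sq_nonneg _)

private lemma l2norm_unitary [NeZero k] (U : Matrix.unitaryGroup (Fin k) ℝ) :
    ‖(U : Matrix (Fin k) (Fin k) ℝ)‖ = 1 := by
  have h1 : (U : Matrix (Fin k) (Fin k) ℝ)ᴴ * U = 1 := Matrix.UnitaryGroup.star_mul_self U
  have h2 := Matrix.l2_opNorm_conjTranspose_mul_self (U : Matrix (Fin k) (Fin k) ℝ)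
  rw [h1] at h2
  have h3 : ‖(1 : Matrix (Fin k) (Fin k) ℝ)‖ = 1 := norm_one
  nlinarith [norm_nonneg (U : Matrix (Fin k) (Fin k) ℝ)]

private lemma l2norm_hermitian_le [NeZero k] {N : Matrix (Fin k) (Fin k) ℝ} (hN : N.IsHermitian)
    (c : ℝ) (hc : 0 ≤ c) (h : ∀ i, |hN.eigenvalues i| ≤ c) : ‖N‖ ≤ c := by
  conv_lhs => rw [hN.spectral_theorem]
  calc ‖(hN.eigenvectorUnitary : Matrix (Fin k) (Fin k) ℝ) * diagonal (RCLike.ofReal ∘ hN.eigenvalues) * star (hN.eigenvectorUnitary : Matrix (Fin k) (Fin k) ℝ)‖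
      ≤ ‖(hN.eigenvectorUnitary : Matrix (Fin k) (Fin k) ℝ) * diagonal (RCLike.ofReal ∘ hN.eigenvalues)‖ * ‖star (hN.eigenvectorUnitary : Matrix (Fin k) (Fin k) ℝ)‖ :=
        Matrix.l2_opNorm_mul _ _
    _ ≤ ‖(hN.eigenvectorUnitary : Matrix (Fin k) (Fin k) ℝ)‖ * ‖(diagonal (RCLike.ofReal ∘ hN.eigenvalues) : Matrix (Fin k) (Fin k) ℝ)‖ * ‖star (hN.eigenvectorUnitary : Matrix (Fin k) (Fin k) ℝ)‖ :=
        mul_le_mul_of_nonneg_right (Matrix.l2_opNorm_mul _ _) (norm_nonneg _)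
    _ ≤ c := by
        have hU : ‖(hN.eigenvectorUnitary : Matrix (Fin k) (Fin k) ℝ)‖ = 1 := l2norm_unitary _
        have hUs : ‖star (hN.eigenvectorUnitary : Matrix (Fin k) (Fin k) ℝ)‖ = 1 := by
          rw [show star (hN.eigenvectorUnitary : Matrix (Fin k) (Fin k) ℝ) = (hN.eigenvectorUnitary : Matrix (Fin k) (Fin k) ℝ)ᴴ from rfl,
            Matrix.l2_opNorm_conjTranspose, hU]
        rw [hU, hUs, one_mul, mul_one]
        exact l2norm_diagonal_le _ c hc (fun i => by simpa using h i)

private lemma rayleigh_ge_of_eig {N : Matrix (Fin k) (Fin k) ℝ} (hN : N.IsHermitian) (c : ℝ)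
    (h : ∀ i, c ≤ hN.eigenvalues i) (v : Fin k → ℝ) :
    c * (v ⬝ᵥ v) ≤ v ⬝ᵥ (N *ᵥ v) := by
  have hNT : Nᵀ = N := hN
  set b := hN.eigenvectorBasis with hb
  set v' : EuclideanSpace ℝ (Fin k) := (WithLp.equiv 2 (Fin k → ℝ)).symm v with hv'
  set w' : EuclideanSpace ℝ (Fin k) := (WithLp.equiv 2 (Fin k → ℝ)).symm (N *ᵥ v) with hw'
  have key : ∀ i, b.repr w' i = hN.eigenvalues i * b.repr v' i := by
    intro i
    set u : Fin k → ℝ := (WithLp.equiv 2 (Fin k → ℝ)) (b i) with hu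
    have h1 : b.repr w' i = u ⬝ᵥ (N *ᵥ v) := by
      rw [b.repr_apply_apply, dot_eq_inner, hw']
      congr 1
    have h2 : b.repr v' i = u ⬝ᵥ v := by
      rw [b.repr_apply_apply, dot_eq_inner, hv']
      congr 1
    rw [h1, h2, dotProduct_mulVec]
    have h4 : u ᵥ* N = N *ᵥ u := by
      conv_lhs => rw [← hNT]
      exact vecMul_transpose N u
    have h3 : u ᵥ* N = hN.eigenvalues i • u := by
      rw [h4, hu]
      exact hN.mulVec_eigenvectorBasis i
    rw [h3, smul_dotProduct, smul_eq_mul]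
  have hvw : v ⬝ᵥ (N *ᵥ v) = ∑ i, hN.eigenvalues i * (b.repr v' i) ^ 2 := by
    rw [dot_eq_inner, ← hv', ← hw', ← b.repr.inner_map_map v' w', PiLp.inner_apply]
    refine Finset.sum_congr rfl (fun i _ => ?_)
    rw [RCLike.inner_apply, key i]
    ring_nf
    rw [starRingEnd_apply, star_trivial]
    ring
  have hvv : v ⬝ᵥ v = ∑ i, (b.repr v' i) ^ 2 := by
    rw [dot_eq_inner, ← hv', ← b.repr.inner_map_map v' v', PiLp.inner_apply]
    refine Finset.sum_congr rfl (fun i _ => ?_)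
    rw [RCLike.inner_apply, starRingEnd_apply, star_trivial, sq]
  rw [hvw, hvv, Finset.mul_sum]
  exact Finset.sum_le_sum fun i _ => mul_le_mul_of_nonneg_right (h i) (sq_nonneg _)

private lemma l2norm_inv_le [NeZero k] {M : Matrix (Fin k) (Fin k) ℝ} (hM : M.IsHermitian) {c : ℝ}
    (hc : 0 < c) (hd : IsUnit M.det)
    (hray : ∀ v : Fin k → ℝ, c * (v ⬝ᵥ v) ≤ v ⬝ᵥ (M *ᵥ v)) : ‖M⁻¹‖ ≤ 1 / c := by
  have hMi : (M⁻¹).IsHermitian := hM.inv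
  refine l2norm_hermitian_le hMi _ (by positivity) (fun i => ?_)
  set ν := hMi.eigenvalues i with hν0
  set u : Fin k → ℝ := (WithLp.equiv 2 (Fin k → ℝ)) (hMi.eigenvectorBasis i) with hu
  have hmv : M⁻¹ *ᵥ u = ν • u := hMi.mulVec_eigenvectorBasis i
  have huu : u ⬝ᵥ u = 1 := onb_dot_self _ i
  have hMu : M *ᵥ (M⁻¹ *ᵥ u) = u := by
    rw [mulVec_mulVec, Matrix.mul_nonsing_inv _ hd, one_mulVec]
  have h2 : ν • (M *ᵥ u) = u := by
    rw [← mulVec_smul, ← hmv, hMu]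
  set R := u ⬝ᵥ (M *ᵥ u) with hR
  have hcR : c ≤ R := by
    have := hray u
    rwa [huu, mul_one] at this
  have hR0 : 0 < R := lt_of_lt_of_le hc hcR
  have hνR : ν * R = 1 := by
    have h3 : u ⬝ᵥ (ν • (M *ᵥ u)) = u ⬝ᵥ u := by rw [h2]
    rwa [dotProduct_smul, huu, smul_eq_mul] at h3
  have hνval : ν = 1 / R := by
    field_simp
    linarith [hνR]
  rw [hνval, abs_of_nonneg (by positivity)]
  exact one_div_le_one_div_of_le hc hcR

private lemma spectrum_matrix_empty (M : Matrix (Fin 0) (Fin 0) ℝ) : spectrum ℝ M = ∅ := by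
  ext z
  simp only [Set.mem_empty_iff_false, iff_false, spectrum.mem_iff, not_not]
  exact isUnit_of_subsingleton _

private lemma specNorm_le_l2norm {m' n' : ℕ} (B : Matrix (Fin m') (Fin n') ℝ) :
    specNorm B ≤ ‖B‖ := by
  rw [specNorm]
  have hBT : B * Bᵀ = (Bᵀ)ᴴ * Bᵀ := by
    rw [conjTranspose_eq_transpose_of_trivial, transpose_transpose]
  rcases Nat.eq_zero_or_pos m' with h | h
  · subst h
    rw [spectrum_matrix_empty, Real.sSup_empty, Real.sqrt_zero]
    exact norm_nonneg _
  · haveI : NeZero m' := ⟨h.ne'⟩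
    have h1 : sSup (spectrum ℝ (B * Bᵀ)) ≤ ‖B‖ * ‖B‖ := by
      refine Real.sSup_le (fun μ hμ => ?_) (by positivity)
      calc μ ≤ |μ| := le_abs_self μ
        _ ≤ ‖B * Bᵀ‖ := spectrum.norm_le_norm_of_mem hμ
        _ = ‖B‖ * ‖B‖ := by
            rw [hBT, Matrix.l2_opNorm_conjTranspose_mul_self,
              ← conjTranspose_eq_transpose_of_trivial, Matrix.l2_opNorm_conjTranspose]
    calc Real.sqrt (sSup (spectrum ℝ (B * Bᵀ))) ≤ Real.sqrt (‖B‖ * ‖B‖) := Real.sqrt_le_sqrt h1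
      _ = ‖B‖ := Real.sqrt_mul_self (norm_nonneg B)

private lemma sSup_spectrum_psd [NeZero k] {P : Matrix (Fin k) (Fin k) ℝ} (hP : P.PosSemidef) :
    sSup (spectrum ℝ P) = ‖P‖ := by
  have hH : P.IsHermitian := hP.1
  have hbdd : BddAbove (spectrum ℝ P) := by
    rw [hH.spectrum_real_eq_range_eigenvalues]
    exact (Set.finite_range _).bddAbove
  have hmem : ∀ i, hH.eigenvalues i ∈ spectrum ℝ P := hH.eigenvalues_mem_spectrum_real
  have i0 : Fin k := ⟨0, Nat.pos_of_ne_zero (NeZero.ne k)⟩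
  have h0 : (0:ℝ) ≤ sSup (spectrum ℝ P) :=
    le_trans (hP.eigenvalues_nonneg i0) (le_csSup hbdd (hmem i0))
  refine le_antisymm
    (Real.sSup_le (fun μ hμ => (le_abs_self μ).trans (spectrum.norm_le_norm_of_mem hμ))
      (norm_nonneg _))
    (l2norm_hermitian_le hH _ h0 (fun i => ?_))
  rw [abs_of_nonneg (hP.eigenvalues_nonneg i)]
  exact le_csSup hbdd (hmem i)

end Helpers

/-- Spectral-norm bound: `‖X₀ Aᵀ ΔΣ̃ A X₀‖₂ ≤ x_max² σ_max(A)² λ_max(AAᵀ) ‖x₀² − x̃²‖_∞ /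
(x_min⁴ λ_min²(AAᵀ))`, where `Σ̃ = (A X̃² Aᵀ)⁻¹`, `Σ₀ = (A X₀² Aᵀ)⁻¹`, `ΔΣ̃ = Σ̃ − Σ₀`. -/
theorem specNorm_XADSAX_bound {m n : ℕ} (A : Matrix (Fin m) (Fin n) ℝ)
    (xt xo : Fin n → ℝ) (xmin xmax : ℝ) (hmin : 0 < xmin) (hmm : xmin ≤ xmax)
    (hxt : ∀ i, xt i ∈ Set.Icc xmin xmax) (hxo : ∀ i, xo i ∈ Set.Icc xmin xmax)
    (hinvt : IsUnit (A * (Matrix.diagonal xt) ^ 2 * Aᵀ).det)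
    (hinvo : IsUnit (A * (Matrix.diagonal xo) ^ 2 * Aᵀ).det) :
    let St := (A * (Matrix.diagonal xt) ^ 2 * Aᵀ)⁻¹
    let So := (A * (Matrix.diagonal xo) ^ 2 * Aᵀ)⁻¹
    let dS := St - So
    specNorm (Matrix.diagonal xo * Aᵀ * dS * A * Matrix.diagonal xo) ≤
      xmax ^ 2 * (specNorm A) ^ 2 * lamMax (A * Aᵀ) *
          supNorm (fun i => (xo i) ^ 2 - (xt i) ^ 2) /
        (xmin ^ 4 * (lamMin (A * Aᵀ)) ^ 2) := by
  intro St So dS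
  set d : Fin n → ℝ := fun i => (xo i) ^ 2 - (xt i) ^ 2 with hd
  rcases Nat.eq_zero_or_pos m with hm | hm
  · -- degenerate case `m = 0`
    subst hm
    have h1 : Matrix.diagonal xo * Aᵀ * dS = 0 := by
      ext i j
      exact j.elim0
    have hzero : Matrix.diagonal xo * Aᵀ * dS * A * Matrix.diagonal xo = 0 := by
      rw [h1, Matrix.zero_mul, Matrix.zero_mul]
    have hlam : lamMin (A * Aᵀ) = 0 := by
      rw [lamMin, spectrum_matrix_empty, Real.sInf_empty]
    rw [hzero, hlam]
    norm_num
    calc specNorm (0 : Matrix (Fin n) (Fin n) ℝ) ≤ ‖(0 : Matrix (Fin n) (Fin n) ℝ)‖ :=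
          specNorm_le_l2norm _
      _ = 0 := norm_zero
  haveI : NeZero m := ⟨hm.ne'⟩
  -- basic notation
  have hP_psd : (A * Aᵀ).PosSemidef := by
    have h := Matrix.posSemidef_self_mul_conjTranspose A
    rwa [conjTranspose_eq_transpose_of_trivial] at h
  have hP_herm : (A * Aᵀ).IsHermitian := hP_psd.1
  have hkey : ∀ v : Fin m → ℝ, v ⬝ᵥ ((A * Aᵀ) *ᵥ v) = (Aᵀ *ᵥ v) ⬝ᵥ (Aᵀ *ᵥ v) := by
    intro v
    rw [← mulVec_mulVec, dotProduct_mulVec]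
    congr 1
    have hvA := vecMul_transpose Aᵀ v
    rwa [transpose_transpose] at hvA
  have hMkey : ∀ (x : Fin n → ℝ) (v : Fin m → ℝ),
      v ⬝ᵥ ((A * Matrix.diagonal x ^ 2 * Aᵀ) *ᵥ v)
        = (Aᵀ *ᵥ v) ⬝ᵥ ((Matrix.diagonal x ^ 2) *ᵥ (Aᵀ *ᵥ v)) := by
    intro x v
    rw [← mulVec_mulVec, ← mulVec_mulVec, dotProduct_mulVec]
    congr 1
    have hvA := vecMul_transpose Aᵀ v
    rwa [transpose_transpose] at hvA
  -- positive definiteness of A Aᵀ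
  have hPD : (A * Aᵀ).PosDef := by
    refine PosDef.of_dotProduct_mulVec_pos hP_herm (fun x hx => ?_)
    have hsx : star x = x := by simp
    rw [hsx, hkey x]
    set w := Aᵀ *ᵥ x with hw
    have hw0 : w ≠ 0 := by
      intro hweq
      apply hx
      have h5 : (A * Matrix.diagonal xt ^ 2 * Aᵀ) *ᵥ x = 0 := by
        rw [← mulVec_mulVec, ← hw, hweq, mulVec_zero]
      have h6 := congrArg (fun y => (A * Matrix.diagonal xt ^ 2 * Aᵀ)⁻¹ *ᵥ y) h5
      simpa [mulVec_mulVec, Matrix.nonsing_inv_mul _ hinvt, one_mulVec, mulVec_zero] using h6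
    have h7 : 0 ≤ w ⬝ᵥ w := Finset.sum_nonneg fun i _ => mul_self_nonneg _
    exact lt_of_le_of_ne h7 (fun h8 => hw0 (dotProduct_self_eq_zero.mp h8.symm))
  -- facts about lamMin
  have hfin : (spectrum ℝ (A * Aᵀ)).Finite := by
    rw [hP_herm.spectrum_real_eq_range_eigenvalues]
    exact Set.finite_range _
  have hne : (spectrum ℝ (A * Aᵀ)).Nonempty := by
    rw [hP_herm.spectrum_real_eq_range_eigenvalues]
    exact Set.range_nonempty _
  have hl_pos : 0 < lamMin (A * Aᵀ) := by
    have hmem := hne.csInf_mem hfin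
    rw [hP_herm.spectrum_real_eq_range_eigenvalues] at hmem
    obtain ⟨i, hi⟩ := hmem
    rw [lamMin, hP_herm.spectrum_real_eq_range_eigenvalues, ← hi]
    exact hPD.eigenvalues_pos i
  have hl_le : ∀ i, lamMin (A * Aᵀ) ≤ hP_herm.eigenvalues i := fun i =>
    csInf_le hfin.bddBelow (hP_herm.eigenvalues_mem_spectrum_real i)
  have rayP := rayleigh_ge_of_eig hP_herm _ hl_le
  set c := xmin ^ 2 * lamMin (A * Aᵀ) with hc
  have hc_pos : 0 < c := by positivity
  -- Rayleigh bound for A X² Aᵀ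
  have rayM : ∀ (x : Fin n → ℝ), (∀ i, xmin ≤ x i) → ∀ v : Fin m → ℝ,
      c * (v ⬝ᵥ v) ≤ v ⬝ᵥ ((A * Matrix.diagonal x ^ 2 * Aᵀ) *ᵥ v) := by
    intro x hx v
    rw [hMkey x v]
    set w := Aᵀ *ᵥ v with hw
    have h1 : xmin ^ 2 * (w ⬝ᵥ w) ≤ w ⬝ᵥ ((Matrix.diagonal x ^ 2) *ᵥ w) := by
      rw [diagonal_pow]
      simp only [dotProduct, mulVec_diagonal, Pi.pow_apply]
      rw [Finset.mul_sum]
      apply Finset.sum_le_sum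
      intro i _
      have hxx : xmin ^ 2 ≤ x i ^ 2 := pow_le_pow_left₀ hmin.le (hx i) 2
      nlinarith [mul_self_nonneg (w i)]
    have h2 : lamMin (A * Aᵀ) * (v ⬝ᵥ v) ≤ w ⬝ᵥ w := by
      rw [hw, ← hkey v]
      exact rayP v
    calc c * (v ⬝ᵥ v) = xmin ^ 2 * (lamMin (A * Aᵀ) * (v ⬝ᵥ v)) := by rw [hc]; ring
      _ ≤ xmin ^ 2 * (w ⬝ᵥ w) := mul_le_mul_of_nonneg_left h2 (by positivity)
      _ ≤ _ := h1
  -- hermitian structure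
  have hD2psd : ∀ x : Fin n → ℝ, ((Matrix.diagonal x) ^ 2).PosSemidef := by
    intro x
    rw [diagonal_pow]
    exact posSemidef_diagonal_iff.2 (fun i => by simpa using sq_nonneg (x i))
  have hMherm : ∀ x : Fin n → ℝ, (A * Matrix.diagonal x ^ 2 * Aᵀ).IsHermitian := by
    intro x
    have h := (hD2psd x).mul_mul_conjTranspose_same A
    rw [conjTranspose_eq_transpose_of_trivial] at h
    exact h.1
  -- norm bounds for the inverses
  have hSo : ‖So‖ ≤ 1 / c :=
    l2norm_inv_le (hMherm xo) hc_pos hinvo (rayM xo (fun i => (hxo i).1))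
  have hSt : ‖St‖ ≤ 1 / c :=
    l2norm_inv_le (hMherm xt) hc_pos hinvt (rayM xt (fun i => (hxt i).1))
  -- elementary norm bounds
  have hxmax : (0:ℝ) ≤ xmax := le_trans hmin.le hmm
  have hDn : ‖(Matrix.diagonal xo : Matrix (Fin n) (Fin n) ℝ)‖ ≤ xmax :=
    l2norm_diagonal_le xo xmax hxmax fun i => by
      rw [abs_of_nonneg (le_trans hmin.le (hxo i).1)]
      exact (hxo i).2
  have hsupd : (0:ℝ) ≤ supNorm d := Real.iSup_nonneg fun i => abs_nonneg _
  have hdiagd : ‖(Matrix.diagonal d : Matrix (Fin n) (Fin n) ℝ)‖ ≤ supNorm d :=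
    l2norm_diagonal_le d (supNorm d) hsupd fun i => by
      rw [supNorm]
      exact le_ciSup (f := fun j => |d j|) (Finite.bddAbove_range _) i
  have hAT : ‖Aᵀ‖ = ‖A‖ := by
    rw [← conjTranspose_eq_transpose_of_trivial, Matrix.l2_opNorm_conjTranspose]
  -- algebraic identity for dS
  have hMoMt : A * Matrix.diagonal xo ^ 2 * Aᵀ - A * Matrix.diagonal xt ^ 2 * Aᵀ
      = A * Matrix.diagonal d * Aᵀ := by
    rw [diagonal_pow, diagonal_pow, ← Matrix.sub_mul, ← Matrix.mul_sub, diagonal_sub]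
    congr 1
  have hdS : dS = St * (A * Matrix.diagonal d * Aᵀ) * So := by
    have h1 : St * (A * Matrix.diagonal xo ^ 2 * Aᵀ) * So = St := by
      rw [Matrix.mul_assoc, Matrix.mul_nonsing_inv _ hinvo, Matrix.mul_one]
    have h2 : St * (A * Matrix.diagonal xt ^ 2 * Aᵀ) * So = So := by
      rw [Matrix.nonsing_inv_mul _ hinvt, Matrix.one_mul]
    calc dS = St - So := rfl
      _ = St * (A * Matrix.diagonal xo ^ 2 * Aᵀ) * So
            - St * (A * Matrix.diagonal xt ^ 2 * Aᵀ) * So := by rw [h1, h2]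
      _ = St * (A * Matrix.diagonal xo ^ 2 * Aᵀ - A * Matrix.diagonal xt ^ 2 * Aᵀ) * So := by
          rw [Matrix.mul_sub, Matrix.sub_mul]
      _ = St * (A * Matrix.diagonal d * Aᵀ) * So := by rw [hMoMt]
  -- norm bound for dS
  have hmid : ‖A * Matrix.diagonal d * Aᵀ‖ ≤ ‖A‖ * supNorm d * ‖A‖ := by
    calc ‖A * Matrix.diagonal d * Aᵀ‖ ≤ ‖A * Matrix.diagonal d‖ * ‖Aᵀ‖ :=
          Matrix.l2_opNorm_mul _ _
      _ ≤ ‖A‖ * ‖(Matrix.diagonal d : Matrix (Fin n) (Fin n) ℝ)‖ * ‖Aᵀ‖ :=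
          mul_le_mul_of_nonneg_right (Matrix.l2_opNorm_mul _ _) (norm_nonneg _)
      _ ≤ ‖A‖ * supNorm d * ‖A‖ := by
          rw [hAT]
          exact mul_le_mul_of_nonneg_right
            (mul_le_mul_of_nonneg_left hdiagd (norm_nonneg _)) (norm_nonneg _)
  have hdSnorm : ‖dS‖ ≤ 1 / c * (‖A‖ * supNorm d * ‖A‖) * (1 / c) := by
    rw [hdS]
    calc ‖St * (A * Matrix.diagonal d * Aᵀ) * So‖
        ≤ ‖St * (A * Matrix.diagonal d * Aᵀ)‖ * ‖So‖ := Matrix.l2_opNorm_mul _ _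
      _ ≤ ‖St‖ * ‖A * Matrix.diagonal d * Aᵀ‖ * ‖So‖ :=
          mul_le_mul_of_nonneg_right (Matrix.l2_opNorm_mul _ _) (norm_nonneg _)
      _ ≤ 1 / c * (‖A‖ * supNorm d * ‖A‖) * (1 / c) := by
          apply mul_le_mul
          · exact mul_le_mul hSt hmid (norm_nonneg _) (by positivity)
          · exact hSo
          · exact norm_nonneg _
          · positivity
  -- norm bound for the full matrix
  have hTnorm : ‖Matrix.diagonal xo * Aᵀ * dS * A * Matrix.diagonal xo‖
      ≤ xmax * ‖A‖ * (1 / c * (‖A‖ * supNorm d * ‖A‖) * (1 / c)) * ‖A‖ * xmax := by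
    calc ‖Matrix.diagonal xo * Aᵀ * dS * A * Matrix.diagonal xo‖
        ≤ ‖Matrix.diagonal xo * Aᵀ * dS * A‖ * ‖(Matrix.diagonal xo : Matrix (Fin n) (Fin n) ℝ)‖ :=
          Matrix.l2_opNorm_mul _ _
      _ ≤ ‖Matrix.diagonal xo * Aᵀ * dS‖ * ‖A‖ * ‖(Matrix.diagonal xo : Matrix (Fin n) (Fin n) ℝ)‖ :=
          mul_le_mul_of_nonneg_right (Matrix.l2_opNorm_mul _ _) (norm_nonneg _)
      _ ≤ ‖Matrix.diagonal xo * Aᵀ‖ * ‖dS‖ * ‖A‖ * ‖(Matrix.diagonal xo : Matrix (Fin n) (Fin n) ℝ)‖ :=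
          mul_le_mul_of_nonneg_right (mul_le_mul_of_nonneg_right
            (Matrix.l2_opNorm_mul _ _) (norm_nonneg _)) (norm_nonneg _)
      _ ≤ ‖(Matrix.diagonal xo : Matrix (Fin n) (Fin n) ℝ)‖ * ‖Aᵀ‖ * ‖dS‖ * ‖A‖
            * ‖(Matrix.diagonal xo : Matrix (Fin n) (Fin n) ℝ)‖ :=
          mul_le_mul_of_nonneg_right (mul_le_mul_of_nonneg_right
            (mul_le_mul_of_nonneg_right (Matrix.l2_opNorm_mul _ _) (norm_nonneg _))
            (norm_nonneg _)) (norm_nonneg _)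
      _ ≤ xmax * ‖A‖ * (1 / c * (‖A‖ * supNorm d * ‖A‖) * (1 / c)) * ‖A‖ * xmax := by
          rw [hAT]
          apply mul_le_mul _ hDn (norm_nonneg _) (by positivity)
          apply mul_le_mul _ le_rfl (norm_nonneg _) (by positivity)
          apply mul_le_mul _ hdSnorm (norm_nonneg _) (by positivity)
          exact mul_le_mul hDn le_rfl (norm_nonneg _) hxmax
  -- identification of specNorm and lamMax with operator norms
  have hAAT : ‖A * Aᵀ‖ = ‖A‖ * ‖A‖ := by
    rw [show A * Aᵀ = (Aᵀ)ᴴ * Aᵀ by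
        rw [conjTranspose_eq_transpose_of_trivial, transpose_transpose],
      Matrix.l2_opNorm_conjTranspose_mul_self, ← conjTranspose_eq_transpose_of_trivial,
      Matrix.l2_opNorm_conjTranspose]
  have hAnorm : specNorm A = ‖A‖ := by
    rw [specNorm, sSup_spectrum_psd hP_psd, hAAT]
    exact Real.sqrt_mul_self (norm_nonneg _)
  have hlamMax : lamMax (A * Aᵀ) = ‖A‖ * ‖A‖ := by
    rw [lamMax, sSup_spectrum_psd hP_psd, hAAT]
  -- final computation
  have hEq : xmax * ‖A‖ * (1 / c * (‖A‖ * supNorm d * ‖A‖) * (1 / c)) * ‖A‖ * xmax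
      = xmax ^ 2 * (specNorm A) ^ 2 * lamMax (A * Aᵀ) * supNorm d
        / (xmin ^ 4 * (lamMin (A * Aᵀ)) ^ 2) := by
    rw [hAnorm, hlamMax, hc]
    field_simp
  calc specNorm (Matrix.diagonal xo * Aᵀ * dS * A * Matrix.diagonal xo)
      ≤ ‖Matrix.diagonal xo * Aᵀ * dS * A * Matrix.diagonal xo‖ := specNorm_le_l2norm _
    _ ≤ xmax * ‖A‖ * (1 / c * (‖A‖ * supNorm d * ‖A‖) * (1 / c)) * ‖A‖ * xmax := hTnorm
    _ = _ := by rw [hEq]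
end
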